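/- arXiv:1211.1703 — 8 statements merged into one kernel-verified Lean document; each statement's English description precedes it below -/
import Mathlib

section
/- Consider LP2 with a partial-saturation level c*. Then the function u : 𝒫([n]) → ℝ given by u(S) = max{ c* − cost(S), 0 } is feasible for LP2, and it is the unique maximizer of the LP2 objective over all LP2-feasible functions. -/
open Finset
open scoped BigOperators Classical

/-- The probability of the set `S` of items having high value. -/
def pmass (n : ℕ) (p : Fin n → ℝ) (S : Finset (Fin n)) : ℝ :=
  (∏ i ∈ S, p i) * ∏ i ∈ Sᶜ, (1 - p i)

/-- `cost(S) = Σ_{i ∉ S} d i`. -/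
def cost (n : ℕ) (d : Fin n → ℝ) (S : Finset (Fin n)) : ℝ := ∑ i ∈ Sᶜ, d i

/-- Feasibility for LP2. -/
def LP2Feasible (n : ℕ) (d : Fin n → ℝ) (u : Finset (Fin n) → ℝ) : Prop :=
  (∀ S : Finset (Fin n), ∀ i ∉ S, u (insert i S) - u S ≤ d i) ∧
  (∀ S : Finset (Fin n), 0 ≤ u S)

/-- The LP2 objective. -/
def LP2Obj (n : ℕ) (p x : Fin n → ℝ) (B : ℝ) (u : Finset (Fin n) → ℝ) : ℝ :=
  ∑ S : Finset (Fin n), pmass n p S * ((∑ i ∈ S, x i) - B) * u S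

lemma pmass_pos (n : ℕ) (p : Fin n → ℝ) (hp : ∀ i, p i ∈ Set.Ioo (0:ℝ) 1) (S : Finset (Fin n)) :
    0 < pmass n p S := by
  apply mul_pos
  · exact Finset.prod_pos fun i _ => (hp i).1
  · exact Finset.prod_pos fun i _ => by linarith [(hp i).2]

lemma cost_nonneg (n : ℕ) (d : Fin n → ℝ) (hd : ∀ i, 0 < d i) (S : Finset (Fin n)) :
    0 ≤ cost n d S :=
  Finset.sum_nonneg fun i _ => (hd i).le

lemma cost_insert (n : ℕ) (d : Fin n → ℝ) (S : Finset (Fin n)) {i : Fin n} (hi : i ∉ S) :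
    cost n d S = d i + cost n d (insert i S) := by
  unfold cost
  rw [Finset.compl_insert, ← Finset.add_sum_erase _ d (Finset.mem_compl.mpr hi)]

lemma chain (n : ℕ) (d : Fin n → ℝ) (u : Finset (Fin n) → ℝ)
    (h : ∀ S : Finset (Fin n), ∀ i ∉ S, u (insert i S) - u S ≤ d i) :
    ∀ S : Finset (Fin n), u Finset.univ ≤ u S + cost n d S := by
  have key : ∀ k : ℕ, ∀ S : Finset (Fin n), Sᶜ.card = k → u Finset.univ ≤ u S + cost n d S := by
    intro k
    induction k with
    | zero =>
      intro S hS
      have h0 : Sᶜ = ∅ := Finset.card_eq_zero.mp hS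
      have hSu : S = Finset.univ := by rwa [Finset.compl_eq_empty_iff] at h0
      subst hSu
      simp [cost]
    | succ k ih =>
      intro S hS
      have hne : Sᶜ.Nonempty := by rw [← Finset.card_pos, hS]; omega
      obtain ⟨i, hi⟩ := hne
      have hiS : i ∉ S := Finset.mem_compl.mp hi
      have hcard : (insert i S)ᶜ.card = k := by
        rw [Finset.compl_insert, Finset.card_erase_of_mem hi, hS]
        rfl
      have h1 := ih (insert i S) hcard
      have h2 := h S i hiS
      have hc := cost_insert n d S hiS
      linarith
  intro S; exact key _ S rfl


theorem stmt_2 (n : ℕ) (hn : 1 ≤ n) (d p x : Fin n → ℝ) (B : ℝ)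
    (hd : ∀ i, 0 < d i) (hp : ∀ i, p i ∈ Set.Ioo (0:ℝ) 1) (hx : ∀ i, 0 < x i)
    (hpos : B < ∑ i, x i)
    (hneg : ∀ S : Finset (Fin n), S ≠ Finset.univ → ∑ i ∈ S, x i < B)
    (cstar : ℝ)
    (hcs : ∃ Sstar : Finset (Fin n), Sstar ≠ Finset.univ ∧ cstar = cost n d Sstar)
    (hsat1 :
      ∑ S ∈ Finset.univ.filter
          (fun S : Finset (Fin n) => S ≠ Finset.univ ∧ cost n d S < cstar),
          pmass n p S * (B - ∑ i ∈ S, x i)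
        < pmass n p Finset.univ * ((∑ i, x i) - B))
    (hsat2 :
      pmass n p Finset.univ * ((∑ i, x i) - B)
        < ∑ S ∈ Finset.univ.filter
            (fun S : Finset (Fin n) => S ≠ Finset.univ ∧ cost n d S ≤ cstar),
            pmass n p S * (B - ∑ i ∈ S, x i)) :
    LP2Feasible n d (fun S => max (cstar - cost n d S) 0) ∧
    ∀ u, LP2Feasible n d u →
      LP2Obj n p x B u ≤ LP2Obj n p x B (fun S => max (cstar - cost n d S) 0) ∧
      (LP2Obj n p x B u = LP2Obj n p x B (fun S => max (cstar - cost n d S) 0) →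
        u = fun S => max (cstar - cost n d S) 0) := by
  classical
  set g : Finset (Fin n) → ℝ := fun S => pmass n p S * ((∑ i ∈ S, x i) - B) with hg
  set A : Finset (Finset (Fin n)) :=
    Finset.univ.filter (fun S : Finset (Fin n) => S ≠ Finset.univ) with hA
  have hgneg : ∀ S ∈ A, g S < 0 := by
    intro S hS
    have hS' : S ≠ Finset.univ := (Finset.mem_filter.mp hS).2
    have h1 := hneg S hS'
    exact mul_neg_of_pos_of_neg (pmass_pos n p hp S) (by linarith)
  have hguniv : (0:ℝ) < g Finset.univ := mul_pos (pmass_pos n p hp _) (by simpa using sub_pos.mpr hpos)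
  have hgu : g Finset.univ = pmass n p Finset.univ * ((∑ i, x i) - B) := rfl
  have hcs0 : 0 ≤ cstar := by
    obtain ⟨S, _, hSc⟩ := hcs
    rw [hSc]; exact cost_nonneg n d hd S
  have hcostuniv : cost n d (Finset.univ : Finset (Fin n)) = 0 := by simp [cost]
  -- split of the objective
  have hsplit : ∀ v : Finset (Fin n) → ℝ,
      LP2Obj n p x B v = g Finset.univ * v Finset.univ + ∑ S ∈ A, g S * v S := by
    intro v
    unfold LP2Obj
    rw [← Finset.sum_filter_add_sum_filter_not Finset.univ
      (fun S : Finset (Fin n) => S ≠ Finset.univ)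
      (fun S => pmass n p S * ((∑ i ∈ S, x i) - B) * v S)]
    have he : Finset.univ.filter (fun S : Finset (Fin n) => ¬ S ≠ Finset.univ)
        = {Finset.univ} := by
      simp only [not_not]
      rw [Finset.filter_eq']
      simp
    rw [he, Finset.sum_singleton, add_comm]
  -- rewrite the saturation hypotheses
  have hsat1' : 0 < g Finset.univ + ∑ S ∈ A.filter (fun S => cost n d S < cstar), g S := by
    have hf : Finset.univ.filter (fun S : Finset (Fin n) => S ≠ Finset.univ ∧ cost n d S < cstar)
        = A.filter (fun S => cost n d S < cstar) := by
      rw [hA, Finset.filter_filter]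
    rw [hf] at hsat1
    have he : ∑ S ∈ A.filter (fun S => cost n d S < cstar), pmass n p S * (B - ∑ i ∈ S, x i)
        = -∑ S ∈ A.filter (fun S => cost n d S < cstar), g S := by
      rw [← Finset.sum_neg_distrib]
      exact Finset.sum_congr rfl fun S _ => by simp [hg]; ring
    rw [he] at hsat1
    rw [← hgu] at hsat1
    linarith
  have hsat2' : g Finset.univ + ∑ S ∈ A.filter (fun S => cost n d S ≤ cstar), g S < 0 := by
    have hf : Finset.univ.filter (fun S : Finset (Fin n) => S ≠ Finset.univ ∧ cost n d S ≤ cstar)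
        = A.filter (fun S => cost n d S ≤ cstar) := by
      rw [hA, Finset.filter_filter]
    rw [hf] at hsat2
    have he : ∑ S ∈ A.filter (fun S => cost n d S ≤ cstar), pmass n p S * (B - ∑ i ∈ S, x i)
        = -∑ S ∈ A.filter (fun S => cost n d S ≤ cstar), g S := by
      rw [← Finset.sum_neg_distrib]
      exact Finset.sum_congr rfl fun S _ => by simp [hg]; ring
    rw [he] at hsat2
    rw [← hgu] at hsat2
    linarith
  -- feasibility
  have hfeas : LP2Feasible n d (fun S => max (cstar - cost n d S) 0) := by
    constructor
    · intro S i hiS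
      have hc := cost_insert n d S hiS
      have hdi := (hd i).le
      have h1 : max (cstar - cost n d (insert i S)) 0 ≤ max (cstar - cost n d S) 0 + d i := by
        apply max_le
        · have := le_max_left (cstar - cost n d S) 0; linarith
        · have := le_max_right (cstar - cost n d S) 0; linarith
      show max (cstar - cost n d (insert i S)) 0 - max (cstar - cost n d S) 0 ≤ d i
      linarith
    · intro S; exact le_max_right _ _
  set F : ℝ → ℝ := fun t => g Finset.univ * t + ∑ S ∈ A, g S * max (t - cost n d S) 0 with hF
  have hFm : LP2Obj n p x B (fun S => max (cstar - cost n d S) 0) = F cstar := by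
    rw [hsplit]
    simp [hF, hcostuniv, hcs0]
  -- strict maximality of F at cstar
  have hFstrict : ∀ t : ℝ, t ≠ cstar → F t < F cstar := by
    intro t ht
    rcases lt_or_gt_of_ne ht with hlt | hgt
    · -- t < cstar
      have hbound : ∀ S ∈ A, g S * max (t - cost n d S) 0
          ≤ g S * max (cstar - cost n d S) 0
            + g S * (if cost n d S < cstar then t - cstar else 0) := by
        intro S hS
        have hgS := hgneg S hS
        by_cases hc : cost n d S < cstar
        · rw [if_pos hc]
          have h1 : max (cstar - cost n d S) 0 = cstar - cost n d S :=
            max_eq_left (by linarith)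
          have h2 : t - cost n d S ≤ max (t - cost n d S) 0 := le_max_left _ _
          nlinarith
        · push_neg at hc
          have h1 : max (cstar - cost n d S) 0 = 0 := max_eq_right (by linarith)
          have h2 : max (t - cost n d S) 0 = 0 := max_eq_right (by linarith)
          rw [if_neg (not_lt.mpr hc), h1, h2]
          simp
      have hsum := Finset.sum_le_sum hbound
      rw [Finset.sum_add_distrib] at hsum
      have hif : ∑ S ∈ A, g S * (if cost n d S < cstar then t - cstar else 0)
          = (t - cstar) * ∑ S ∈ A.filter (fun S => cost n d S < cstar), g S := by
        rw [Finset.mul_sum,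
          ← Finset.sum_filter_add_sum_filter_not A (fun S => cost n d S < cstar)
            (fun S => g S * (if cost n d S < cstar then t - cstar else 0))]
        have hz : ∑ S ∈ A.filter (fun S => ¬ cost n d S < cstar),
            g S * (if cost n d S < cstar then t - cstar else 0) = 0 :=
          Finset.sum_eq_zero fun S hS => by
            rw [if_neg (Finset.mem_filter.mp hS).2]; ring
        rw [hz, add_zero]
        refine Finset.sum_congr rfl fun S hS => ?_
        rw [if_pos (Finset.mem_filter.mp hS).2]; ring
      rw [hif] at hsum
      have hneg' : (t - cstar) * (g Finset.univ
          + ∑ S ∈ A.filter (fun S => cost n d S < cstar), g S) < 0 :=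
        mul_neg_of_neg_of_pos (by linarith) hsat1'
      simp only [hF]
      nlinarith
    · -- t > cstar
      have hbound : ∀ S ∈ A, g S * max (t - cost n d S) 0
          ≤ g S * max (cstar - cost n d S) 0
            + g S * (if cost n d S ≤ cstar then t - cstar else 0) := by
        intro S hS
        have hgS := hgneg S hS
        by_cases hc : cost n d S ≤ cstar
        · rw [if_pos hc]
          have h1 : max (cstar - cost n d S) 0 = cstar - cost n d S :=
            max_eq_left (by linarith)
          have h2 : max (t - cost n d S) 0 = t - cost n d S :=
            max_eq_left (by linarith)
          rw [h1, h2]; ring_nf; nlinarith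
        · push_neg at hc
          have h1 : max (cstar - cost n d S) 0 = 0 := max_eq_right (by linarith)
          have h2 : 0 ≤ max (t - cost n d S) 0 := le_max_right _ _
          rw [if_neg (not_le.mpr hc), h1]
          nlinarith
      have hsum := Finset.sum_le_sum hbound
      rw [Finset.sum_add_distrib] at hsum
      have hif : ∑ S ∈ A, g S * (if cost n d S ≤ cstar then t - cstar else 0)
          = (t - cstar) * ∑ S ∈ A.filter (fun S => cost n d S ≤ cstar), g S := by
        rw [Finset.mul_sum,
          ← Finset.sum_filter_add_sum_filter_not A (fun S => cost n d S ≤ cstar)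
            (fun S => g S * (if cost n d S ≤ cstar then t - cstar else 0))]
        have hz : ∑ S ∈ A.filter (fun S => ¬ cost n d S ≤ cstar),
            g S * (if cost n d S ≤ cstar then t - cstar else 0) = 0 :=
          Finset.sum_eq_zero fun S hS => by
            rw [if_neg (Finset.mem_filter.mp hS).2]; ring
        rw [hz, add_zero]
        refine Finset.sum_congr rfl fun S hS => ?_
        rw [if_pos (Finset.mem_filter.mp hS).2]; ring
      rw [hif] at hsum
      have hneg' : (t - cstar) * (g Finset.univ
          + ∑ S ∈ A.filter (fun S => cost n d S ≤ cstar), g S) < 0 :=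
        mul_neg_of_pos_of_neg (by linarith) hsat2'
      simp only [hF]
      nlinarith
  have hFle : ∀ t : ℝ, F t ≤ F cstar := by
    intro t
    by_cases h : t = cstar
    · rw [h]
    · exact (hFstrict t h).le
  -- main bound : Obj u ≤ F (u univ)
  have hmain : ∀ u : Finset (Fin n) → ℝ, LP2Feasible n d u →
      LP2Obj n p x B u ≤ F (u Finset.univ) := by
    intro u hu
    rw [hsplit u]
    simp only [hF]
    refine add_le_add le_rfl (Finset.sum_le_sum ?_)
    intro S hS
    have hgS := hgneg S hS
    have hub : max (u Finset.univ - cost n d S) 0 ≤ u S := by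
      refine max_le ?_ (hu.2 S)
      have := chain n d u hu.1 S
      linarith
    nlinarith
  refine ⟨hfeas, fun u hu => ?_⟩
  have h1 := hmain u hu
  have h2 := hFle (u Finset.univ)
  constructor
  · rw [hFm]; linarith
  · intro heq
    rw [hFm] at heq
    have ht : u Finset.univ = cstar := by
      by_contra hne
      have := hFstrict _ hne
      linarith
    have hObj : LP2Obj n p x B u = g Finset.univ * cstar + ∑ S ∈ A, g S * u S := by
      rw [hsplit u, ht]
    have hFc : F cstar = g Finset.univ * cstar
        + ∑ S ∈ A, g S * max (cstar - cost n d S) 0 := rfl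
    have hsum0 : ∑ S ∈ A, (g S * u S - g S * max (cstar - cost n d S) 0) = 0 := by
      rw [Finset.sum_sub_distrib]
      rw [hObj, hFc] at heq
      linarith
    have hterm : ∀ S ∈ A, g S * u S - g S * max (cstar - cost n d S) 0 ≤ 0 := by
      intro S hS
      have hgS := hgneg S hS
      have hub : max (cstar - cost n d S) 0 ≤ u S := by
        refine max_le ?_ (hu.2 S)
        have := chain n d u hu.1 S
        linarith
      nlinarith
    have hall := (Finset.sum_eq_zero_iff_of_nonpos hterm).mp hsum0
    funext S
    by_cases hS : S = Finset.univ
    · subst hS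
      rw [ht]
      simp [hcostuniv, hcs0]
    · have hSA : S ∈ A := Finset.mem_filter.mpr ⟨Finset.mem_univ _, hS⟩
      have hz := hall S hSA
      have hgS := hgneg S hSA
      have h' : g S * (u S - max (cstar - cost n d S) 0) = 0 := by linarith [hz]
      rcases mul_eq_zero.mp h' with h | h
      · exact absurd h (ne_of_lt hgS)
      · linarith
end

section
/- Fix n ≥ 1, reals d_i > 0, p_i ∈ (0,1), reals x_i > 0 and B, and suppose c* is a partial-saturation level for LP2. Let κ > 0 and a_i > 0 satisfy B = κ·(1 + Σ_{i∈[n]} a_i/d_i) and x_i = κ·a_i/(p_i·d_i) for all i. Then LP1 with parameters a, d, p has a unique optimal solution (u, q); in it, u(S) = max{ c* − cost(S), 0 } for every S ⊆ [n], and in particular u([n]) = c*. -/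
open Finset
open scoped BigOperators Classical

/-- The valuation vector of type `S`: `a i + d i` for `i ∈ S` (high) and `a i` otherwise. -/
def vval (n : ℕ) (a d : Fin n → ℝ) (S : Finset (Fin n)) (i : Fin n) : ℝ :=
  if i ∈ S then a i + d i else a i

/-- Feasibility for LP1: (BIC), (IR) and (PROB). -/
def LP1Feasible (n : ℕ) (a d : Fin n → ℝ) (u : Finset (Fin n) → ℝ)
    (q : Finset (Fin n) → Fin n → ℝ) : Prop :=
  (∀ S T : Finset (Fin n),
      u S ≥ u T + ∑ i, (vval n a d S i - vval n a d T i) * q T i) ∧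
  (∀ S : Finset (Fin n), 0 ≤ u S) ∧
  (∀ S : Finset (Fin n), ∀ i, 0 ≤ q S i ∧ q S i ≤ 1)

/-- The LP1 objective (expected revenue). -/
def LP1Obj (n : ℕ) (a d p : Fin n → ℝ) (u : Finset (Fin n) → ℝ)
    (q : Finset (Fin n) → Fin n → ℝ) : ℝ :=
  ∑ S : Finset (Fin n), pmass n p S * ((∑ i, vval n a d S i * q S i) - u S)

namespace Stmt5

variable {n : ℕ}

lemma cost_univ (d : Fin n → ℝ) : cost n d Finset.univ = 0 := by
  simp [cost]

lemma cost_insert (d : Fin n → ℝ) {S : Finset (Fin n)} {i : Fin n} (hi : i ∉ S) :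
    cost n d (insert i S) = cost n d S - d i := by
  have h : i ∈ Sᶜ := by simpa using hi
  simp only [cost, Finset.compl_insert]
  rw [← Finset.add_sum_erase _ _ h]
  ring

lemma cost_sub (d : Fin n → ℝ) (S T : Finset (Fin n)) :
    cost n d S - cost n d T = (∑ i ∈ T \ S, d i) - (∑ i ∈ S \ T, d i) := by
  have h1 : Sᶜ \ Tᶜ = T \ S := by ext j; simp [Finset.mem_sdiff]; tauto
  have h2 : Tᶜ \ Sᶜ = S \ T := by ext j; simp [Finset.mem_sdiff]; tauto
  have h3 := Finset.sum_sdiff_sub_sum_sdiff (s₁ := Tᶜ) (s₂ := Sᶜ) (f := d)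
  rw [h1, h2] at h3
  simpa [cost] using h3.symm

lemma pmass_pos (p : Fin n → ℝ) (hp : ∀ i, p i ∈ Set.Ioo (0:ℝ) 1) (S : Finset (Fin n)) :
    0 < pmass n p S := by
  apply mul_pos
  · exact Finset.prod_pos fun i _ => (hp i).1
  · exact Finset.prod_pos fun i _ => by linarith [(hp i).2]

lemma pmass_erase (p : Fin n → ℝ) {T : Finset (Fin n)} {i : Fin n} (hi : i ∈ T) :
    pmass n p (T.erase i) * p i = pmass n p T * (1 - p i) := by
  have h1 : (T.erase i)ᶜ = insert i Tᶜ := Finset.compl_erase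
  have h2 : i ∉ Tᶜ := by simpa using hi
  rw [pmass, pmass, h1, Finset.prod_insert h2, ← Finset.mul_prod_erase _ _ hi]
  ring

lemma two_point (m s t : ℝ) (hs : 0 ≤ s) (ht : 0 ≤ t) :
    max (m + t) 0 + max (m + s) 0 ≤ max (m + s + t) 0 + max m 0 := by
  simp only [max_def]
  split_ifs <;> linarith

lemma max_shift (x t : ℝ) (ht : 0 ≤ t) : max (x + t) 0 - t ≤ max x 0 := by
  simp only [max_def]; split_ifs <;> linarith

lemma max_diff_mem (m t : ℝ) (ht : 0 ≤ t) :
    0 ≤ max (m + t) 0 - max m 0 ∧ max (m + t) 0 - max m 0 ≤ t := by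
  constructor <;> (simp only [max_def]; split_ifs <;> linarith)

lemma superadd (d : Fin n → ℝ) (hd : ∀ i, 0 ≤ d i) (m : ℝ) (U : Finset (Fin n)) :
    ∑ i ∈ U, (max (m + d i) 0 - max m 0) ≤ max (m + ∑ i ∈ U, d i) 0 - max m 0 := by
  induction U using Finset.induction with
  | empty => simp
  | @insert j s hj ih =>
    rw [Finset.sum_insert hj, Finset.sum_insert hj]
    have hs : 0 ≤ ∑ i ∈ s, d i := Finset.sum_nonneg fun i _ => hd i
    have h2 := two_point m (∑ i ∈ s, d i) (d j) hs (hd j)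
    have he : m + (d j + ∑ i ∈ s, d i) = m + (∑ i ∈ s, d i) + d j := by ring
    rw [he]
    linarith

lemma telescope (d : Fin n → ℝ) (u : Finset (Fin n) → ℝ)
    (hadj : ∀ (S : Finset (Fin n)) (i : Fin n), i ∉ S → u (insert i S) ≤ u S + d i) :
    ∀ (k : ℕ) (S : Finset (Fin n)), Sᶜ.card ≤ k → u Finset.univ ≤ u S + cost n d S := by
  intro k
  induction k with
  | zero =>
    intro S hS
    have : Sᶜ = ∅ := Finset.card_eq_zero.mp (Nat.le_zero.mp hS)
    have hSu : S = Finset.univ := by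
      rwa [← Finset.compl_eq_empty_iff]
    subst hSu
    simp [cost_univ]
  | succ k ih =>
    intro S hS
    by_cases h : Sᶜ = ∅
    · have hSu : S = Finset.univ := by rwa [← Finset.compl_eq_empty_iff]
      subst hSu; simp [cost_univ]
    · obtain ⟨i, hi⟩ := Finset.nonempty_iff_ne_empty.mpr h
      have hiS : i ∉ S := by simpa using hi
      have hcard : (insert i S)ᶜ.card ≤ k := by
        rw [Finset.compl_insert, Finset.card_erase_of_mem hi]
        omega
      have h1 := ih (insert i S) hcard
      have h2 := hadj S i hiS
      have h3 := cost_insert d hiS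
      rw [h3] at h1
      linarith

lemma swap (F : Finset (Fin n) → Fin n → ℝ) :
    ∑ S : Finset (Fin n), ∑ i ∈ Sᶜ, F (insert i S) i
      = ∑ T : Finset (Fin n), ∑ i ∈ T, F T i := by
  rw [Finset.sum_sigma', Finset.sum_sigma']
  apply Finset.sum_nbij' (fun q => (⟨insert q.2 q.1, q.2⟩ : Σ _ : Finset (Fin n), Fin n))
    (fun q => (⟨q.1.erase q.2, q.2⟩ : Σ _ : Finset (Fin n), Fin n))
  · rintro ⟨S, i⟩ h
    simp only [Finset.mem_sigma, Finset.mem_univ, true_and, Finset.mem_compl] at h ⊢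
    exact Finset.mem_insert_self _ _
  · rintro ⟨T, i⟩ h
    simp only [Finset.mem_sigma, Finset.mem_univ, true_and, Finset.mem_compl] at h ⊢
    simp
  · rintro ⟨S, i⟩ h
    simp only [Finset.mem_sigma, Finset.mem_univ, true_and, Finset.mem_compl] at h
    simp [Finset.erase_insert h]
  · rintro ⟨T, i⟩ h
    simp only [Finset.mem_sigma, Finset.mem_univ, true_and] at h
    simp [Finset.insert_erase h]
  · rintro ⟨S, i⟩ h
    rfl


noncomputable def ustar (n : ℕ) (d : Fin n → ℝ) (c : ℝ) (S : Finset (Fin n)) : ℝ :=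
  max (c - cost n d S) 0

noncomputable def qstar (n : ℕ) (d : Fin n → ℝ) (c : ℝ) (S : Finset (Fin n)) (i : Fin n) : ℝ :=
  if i ∈ S then 1 else (ustar n d c (insert i S) - ustar n d c S) / d i

lemma ustar_insert (d : Fin n → ℝ) (c : ℝ) {S : Finset (Fin n)} {i : Fin n} (hi : i ∉ S) :
    ustar n d c (insert i S) = max ((c - cost n d S) + d i) 0 := by
  rw [ustar, cost_insert d hi]; ring_nf

lemma qstar_mem (d : Fin n → ℝ) (hd : ∀ i, 0 < d i) (c : ℝ) (S : Finset (Fin n)) (i : Fin n) :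
    0 ≤ qstar n d c S i ∧ qstar n d c S i ≤ 1 := by
  rw [qstar]
  split_ifs with h
  · norm_num
  · have h1 := max_diff_mem (c - cost n d S) (d i) (hd i).le
    rw [ustar_insert d c h]
    have hd' := hd i
    constructor
    · apply div_nonneg _ hd'.le
      exact h1.1
    · rw [div_le_one hd']
      exact h1.2

lemma bic_sum (a d : Fin n → ℝ) (hd : ∀ i, 0 < d i) (c : ℝ) (S T : Finset (Fin n)) :
    ∑ i : Fin n, (vval n a d S i - vval n a d T i) * qstar n d c T i
      = (∑ i ∈ S \ T, (ustar n d c (insert i T) - ustar n d c T)) - ∑ i ∈ T \ S, d i := by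
  have key : ∀ i : Fin n, (vval n a d S i - vval n a d T i) * qstar n d c T i
      = (if i ∈ S \ T then (ustar n d c (insert i T) - ustar n d c T) else 0)
        + (if i ∈ T \ S then -d i else 0) := by
    intro i
    by_cases hiS : i ∈ S <;> by_cases hiT : i ∈ T <;>
      simp [vval, qstar, hiS, hiT, Finset.mem_sdiff, mul_div_assoc']
    · rw [mul_div_cancel_left₀ _ (hd i).ne']
  rw [Finset.sum_congr rfl fun i _ => key i, Finset.sum_add_distrib]
  rw [Finset.sum_ite_mem, Finset.sum_ite_mem, Finset.univ_inter, Finset.univ_inter,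
    Finset.sum_neg_distrib]
  ring

lemma ustar_qstar_feasible (a d : Fin n → ℝ) (hd : ∀ i, 0 < d i) (c : ℝ) :
    LP1Feasible n a d (ustar n d c) (qstar n d c) := by
  refine ⟨?_, fun S => le_max_right _ _, fun S i => qstar_mem d hd c S i⟩
  intro S T
  rw [bic_sum a d hd c S T]
  have hrw : ∑ i ∈ S \ T, (ustar n d c (insert i T) - ustar n d c T)
      = ∑ i ∈ S \ T, (max ((c - cost n d T) + d i) 0 - max (c - cost n d T) 0) := by
    refine Finset.sum_congr rfl fun i hi => ?_
    have hiT : i ∉ T := (Finset.mem_sdiff.mp hi).2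
    rw [ustar_insert d c hiT, ustar]
  rw [hrw]
  have h1 := superadd d (fun i => (hd i).le) (c - cost n d T) (S \ T)
  have hts : (0:ℝ) ≤ ∑ i ∈ T \ S, d i := Finset.sum_nonneg fun i _ => (hd i).le
  have h2 := max_shift ((c - cost n d T) + (∑ i ∈ S \ T, d i) - ∑ i ∈ T \ S, d i)
    (∑ i ∈ T \ S, d i) hts
  have he : (c - cost n d T) + (∑ i ∈ S \ T, d i) - (∑ i ∈ T \ S, d i) + ∑ i ∈ T \ S, d i
      = c - cost n d T + ∑ i ∈ S \ T, d i := by ring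
  rw [he] at h2
  have h3 : ustar n d c S
      = max ((c - cost n d T) + (∑ i ∈ S \ T, d i) - ∑ i ∈ T \ S, d i) 0 := by
    rw [ustar]
    congr 1
    have := cost_sub d S T
    linarith
  have h4 : ustar n d c T = max (c - cost n d T) 0 := rfl
  rw [h3, h4]
  linarith

lemma sum_single_diff (a d : Fin n → ℝ) (g : Fin n → ℝ) {S : Finset (Fin n)} {i : Fin n}
    (hi : i ∉ S) :
    ∑ j : Fin n, (vval n a d (insert i S) j - vval n a d S j) * g j = d i * g i := by
  rw [Finset.sum_eq_single i]
  · simp [vval, Finset.mem_insert_self, hi]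
  · intro j _ hj
    have : (j ∈ insert i S) ↔ j ∈ S := by
      simp [Finset.mem_insert, hj]
    simp [vval, this]
  · simp

lemma adj_up {a d : Fin n → ℝ} {u : Finset (Fin n) → ℝ} {q : Finset (Fin n) → Fin n → ℝ}
    (hf : LP1Feasible n a d u q) {S : Finset (Fin n)} {i : Fin n} (hi : i ∉ S) :
    d i * q S i ≤ u (insert i S) - u S := by
  have h := hf.1 (insert i S) S
  rw [sum_single_diff a d _ hi] at h
  linarith

lemma adj_down {a d : Fin n → ℝ} {u : Finset (Fin n) → ℝ} {q : Finset (Fin n) → Fin n → ℝ}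
    (hd : ∀ i, 0 < d i) (hf : LP1Feasible n a d u q) {S : Finset (Fin n)} {i : Fin n}
    (hi : i ∉ S) :
    u (insert i S) ≤ u S + d i := by
  have h := hf.1 S (insert i S)
  have e : ∑ j : Fin n, (vval n a d S j - vval n a d (insert i S) j) * q (insert i S) j
      = -(d i * q (insert i S) i) := by
    rw [← sum_single_diff a d (q (insert i S)) hi, ← Finset.sum_neg_distrib]
    exact Finset.sum_congr rfl fun j _ => by ring
  rw [e] at h
  have hq := (hf.2.2 (insert i S) i).2
  have := mul_le_of_le_one_right (hd i).le hq
  linarith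

lemma vval_split (a d : Fin n → ℝ) (q : Fin n → ℝ) (S : Finset (Fin n)) :
    ∑ i : Fin n, vval n a d S i * q i
      = ∑ i ∈ S, (a i + d i) * q i + ∑ i ∈ Sᶜ, a i * q i := by
  rw [← Finset.sum_add_sum_compl S]
  congr 1
  · exact Finset.sum_congr rfl fun i hi => by simp [vval, hi]
  · exact Finset.sum_congr rfl fun i hi => by
      simp only [Finset.mem_compl] at hi
      simp [vval, hi]

/-- identity I1 : LP1Obj = Afun - G1 -/
lemma I1 (a d p : Fin n → ℝ) (u : Finset (Fin n) → ℝ) (q : Finset (Fin n) → Fin n → ℝ) :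
    LP1Obj n a d p u q
      = (∑ S : Finset (Fin n), pmass n p S *
          ((∑ i ∈ S, (a i + d i)) + (∑ i ∈ Sᶜ, (a i / d i) * (u (insert i S) - u S)) - u S))
        - ∑ S : Finset (Fin n), pmass n p S *
          ((∑ i ∈ S, (a i + d i) * (1 - q S i))
            + ∑ i ∈ Sᶜ, ((a i / d i) * (u (insert i S) - u S) - a i * q S i)) := by
  rw [LP1Obj, ← Finset.sum_sub_distrib]
  refine Finset.sum_congr rfl fun S _ => ?_
  rw [vval_split a d (q S) S]
  have e1 : ∑ i ∈ S, (a i + d i) * (1 - q S i)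
      = (∑ i ∈ S, (a i + d i)) - ∑ i ∈ S, (a i + d i) * q S i := by
    rw [← Finset.sum_sub_distrib]
    exact Finset.sum_congr rfl fun i _ => by ring
  have e2 : ∑ i ∈ Sᶜ, ((a i / d i) * (u (insert i S) - u S) - a i * q S i)
      = (∑ i ∈ Sᶜ, (a i / d i) * (u (insert i S) - u S)) - ∑ i ∈ Sᶜ, a i * q S i :=
    Finset.sum_sub_distrib _ _
  rw [e1, e2]
  ring

lemma g1_term_nonneg {a d : Fin n → ℝ} {u : Finset (Fin n) → ℝ} {q : Finset (Fin n) → Fin n → ℝ}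
    (ha : ∀ i, 0 < a i) (hd : ∀ i, 0 < d i) (hf : LP1Feasible n a d u q) (S : Finset (Fin n)) :
    (∀ i ∈ S, 0 ≤ (a i + d i) * (1 - q S i)) ∧
    (∀ i ∈ Sᶜ, 0 ≤ (a i / d i) * (u (insert i S) - u S) - a i * q S i) := by
  constructor
  · intro i _
    have := (hf.2.2 S i).2
    have := (ha i); have := (hd i)
    nlinarith
  · intro i hi
    have hiS : i ∉ S := by simpa using hi
    have h1 := adj_up hf hiS
    have h2 : a i * q S i = (a i / d i) * (d i * q S i) := by
      rw [div_mul_eq_mul_div, eq_div_iff (hd i).ne']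
      ring
    rw [h2]
    have h3 : 0 ≤ a i / d i := div_nonneg (ha i).le (hd i).le
    nlinarith

lemma G1_nonneg {a d p : Fin n → ℝ} {u : Finset (Fin n) → ℝ} {q : Finset (Fin n) → Fin n → ℝ}
    (ha : ∀ i, 0 < a i) (hd : ∀ i, 0 < d i) (hp : ∀ i, p i ∈ Set.Ioo (0:ℝ) 1)
    (hf : LP1Feasible n a d u q) :
    0 ≤ ∑ S : Finset (Fin n), pmass n p S *
          ((∑ i ∈ S, (a i + d i) * (1 - q S i))
            + ∑ i ∈ Sᶜ, ((a i / d i) * (u (insert i S) - u S) - a i * q S i)) := by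
  apply Finset.sum_nonneg
  intro S _
  obtain ⟨hA, hB⟩ := g1_term_nonneg ha hd hf S
  have hps : (0:ℝ) < pmass n p S := by
    apply mul_pos
    · exact Finset.prod_pos fun i _ => (hp i).1
    · exact Finset.prod_pos fun i _ => by linarith [(hp i).2]
  apply mul_nonneg hps.le
  have := Finset.sum_nonneg hA
  have := Finset.sum_nonneg hB
  linarith

lemma G1_zero {a d p : Fin n → ℝ} {u : Finset (Fin n) → ℝ} {q : Finset (Fin n) → Fin n → ℝ}
    (ha : ∀ i, 0 < a i) (hd : ∀ i, 0 < d i) (hp : ∀ i, p i ∈ Set.Ioo (0:ℝ) 1)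
    (hf : LP1Feasible n a d u q)
    (hz : ∑ S : Finset (Fin n), pmass n p S *
          ((∑ i ∈ S, (a i + d i) * (1 - q S i))
            + ∑ i ∈ Sᶜ, ((a i / d i) * (u (insert i S) - u S) - a i * q S i)) = 0) :
    ∀ (S : Finset (Fin n)) (i : Fin n),
      (i ∈ S → q S i = 1) ∧ (i ∉ S → q S i = (u (insert i S) - u S) / d i) := by
  have hterm : ∀ S ∈ (Finset.univ : Finset (Finset (Fin n))), pmass n p S *
          ((∑ i ∈ S, (a i + d i) * (1 - q S i))
            + ∑ i ∈ Sᶜ, ((a i / d i) * (u (insert i S) - u S) - a i * q S i)) = 0 := by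
    rw [← Finset.sum_eq_zero_iff_of_nonneg]
    · exact hz
    · intro S _
      obtain ⟨hA, hB⟩ := g1_term_nonneg ha hd hf S
      have hps : (0:ℝ) < pmass n p S := by
        apply mul_pos
        · exact Finset.prod_pos fun i _ => (hp i).1
        · exact Finset.prod_pos fun i _ => by linarith [(hp i).2]
      apply mul_nonneg hps.le
      have := Finset.sum_nonneg hA
      have := Finset.sum_nonneg hB
      linarith
  intro S i
  obtain ⟨hA, hB⟩ := g1_term_nonneg ha hd hf S
  have hps : (0:ℝ) < pmass n p S := by
    apply mul_pos
    · exact Finset.prod_pos fun i _ => (hp i).1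
    · exact Finset.prod_pos fun i _ => by linarith [(hp i).2]
  have hsum0 : (∑ i ∈ S, (a i + d i) * (1 - q S i))
      + ∑ i ∈ Sᶜ, ((a i / d i) * (u (insert i S) - u S) - a i * q S i) = 0 := by
    have := hterm S (Finset.mem_univ S)
    exact (mul_eq_zero.mp this).resolve_left hps.ne'
  have hAz : ∑ i ∈ S, (a i + d i) * (1 - q S i) = 0 := by
    have h1 := Finset.sum_nonneg hA
    have h2 := Finset.sum_nonneg hB
    linarith
  have hBz : ∑ i ∈ Sᶜ, ((a i / d i) * (u (insert i S) - u S) - a i * q S i) = 0 := by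
    have h1 := Finset.sum_nonneg hA
    have h2 := Finset.sum_nonneg hB
    linarith
  constructor
  · intro hiS
    have := (Finset.sum_eq_zero_iff_of_nonneg hA).mp hAz i hiS
    have had : 0 < a i + d i := by linarith [(ha i), (hd i)]
    have : 1 - q S i = 0 := (mul_eq_zero.mp this).resolve_left had.ne'
    linarith
  · intro hiS
    have hic : i ∈ Sᶜ := by simpa using hiS
    have h0 := (Finset.sum_eq_zero_iff_of_nonneg hB).mp hBz i hic
    have heq : a i * q S i = a i * ((u (insert i S) - u S) / d i) := by
      have h5 : a i / d i * (u (insert i S) - u S)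
          = a i * ((u (insert i S) - u S) / d i) := by
        rw [div_mul_eq_mul_div, mul_div_assoc]
      linarith
    exact mul_left_cancel₀ (ha i).ne' heq

lemma coeff_term {a d p x : Fin n → ℝ} {κ : ℝ}
    (ha : ∀ i, 0 < a i) (hd : ∀ i, 0 < d i) (hp : ∀ i, p i ∈ Set.Ioo (0:ℝ) 1) (hκ : 0 < κ)
    (hxeq : ∀ i, x i = κ * a i / (p i * d i)) {T : Finset (Fin n)} {i : Fin n} (hi : i ∈ T) :
    pmass n p (T.erase i) * (a i / d i) = pmass n p T * (x i / κ - a i / d i) := by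
  have h := pmass_erase p hi
  rw [hxeq i]
  have hpne : p i ≠ 0 := (hp i).1.ne'
  have hdne : d i ≠ 0 := (hd i).ne'
  have hκne : κ ≠ 0 := hκ.ne'
  field_simp
  linear_combination a i * h

lemma I2 {a d p x : Fin n → ℝ} {κ B : ℝ}
    (ha : ∀ i, 0 < a i) (hd : ∀ i, 0 < d i) (hp : ∀ i, p i ∈ Set.Ioo (0:ℝ) 1) (hκ : 0 < κ)
    (hBeq : B = κ * (1 + ∑ i, a i / d i))
    (hxeq : ∀ i, x i = κ * a i / (p i * d i))
    (u : Finset (Fin n) → ℝ) :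
    ∑ S : Finset (Fin n), pmass n p S *
        ((∑ i ∈ S, (a i + d i)) + (∑ i ∈ Sᶜ, (a i / d i) * (u (insert i S) - u S)) - u S)
      = (∑ S : Finset (Fin n), pmass n p S * (∑ i ∈ S, (a i + d i)))
        + (1/κ) * ∑ T : Finset (Fin n), pmass n p T * ((∑ i ∈ T, x i) - B) * u T := by
  have step1 : ∀ S : Finset (Fin n), pmass n p S *
        ((∑ i ∈ S, (a i + d i)) + (∑ i ∈ Sᶜ, (a i / d i) * (u (insert i S) - u S)) - u S)
      = pmass n p S * (∑ i ∈ S, (a i + d i))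
        + (∑ i ∈ Sᶜ, pmass n p S * (a i / d i) * u (insert i S))
        - pmass n p S * ((1 + ∑ i ∈ Sᶜ, a i / d i) * u S) := by
    intro S
    have e : ∑ i ∈ Sᶜ, (a i / d i) * (u (insert i S) - u S)
        = (∑ i ∈ Sᶜ, (a i / d i) * u (insert i S)) - (∑ i ∈ Sᶜ, a i / d i) * u S := by
      rw [Finset.sum_mul, ← Finset.sum_sub_distrib]
      exact Finset.sum_congr rfl fun i _ => by ring
    have e2 : ∑ i ∈ Sᶜ, pmass n p S * (a i / d i) * u (insert i S)
        = pmass n p S * ∑ i ∈ Sᶜ, (a i / d i) * u (insert i S) := by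
      rw [Finset.mul_sum]
      exact Finset.sum_congr rfl fun i _ => by ring
    rw [e, e2]
    ring
  have hκne : κ ≠ 0 := hκ.ne'
  have mid : ∑ S : Finset (Fin n), ∑ i ∈ Sᶜ, pmass n p S * (a i / d i) * u (insert i S)
      = ∑ T : Finset (Fin n), ∑ i ∈ T, pmass n p (T.erase i) * (a i / d i) * u T := by
    rw [← swap (fun T i => pmass n p (T.erase i) * (a i / d i) * u T)]
    refine Finset.sum_congr rfl fun S _ => Finset.sum_congr rfl fun i hi => ?_
    rw [Finset.erase_insert (by simpa using hi)]
  have mid2 : ∀ T : Finset (Fin n), ∑ i ∈ T, pmass n p (T.erase i) * (a i / d i) * u T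
      = pmass n p T * ((∑ i ∈ T, x i)/κ - ∑ i ∈ T, a i / d i) * u T := by
    intro T
    rw [← Finset.sum_mul]
    congr 1
    calc ∑ i ∈ T, pmass n p (T.erase i) * (a i / d i)
        = ∑ i ∈ T, pmass n p T * (x i / κ - a i / d i) :=
          Finset.sum_congr rfl fun i hi => coeff_term ha hd hp hκ hxeq hi
      _ = pmass n p T * ((∑ i ∈ T, x i)/κ - ∑ i ∈ T, a i / d i) := by
          rw [← Finset.mul_sum, Finset.sum_sub_distrib, Finset.sum_div]
  have final : ∀ T : Finset (Fin n),
      pmass n p T * ((∑ i ∈ T, x i)/κ - ∑ i ∈ T, a i / d i) * u T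
        - pmass n p T * ((1 + ∑ i ∈ Tᶜ, a i / d i) * u T)
      = (1/κ) * (pmass n p T * ((∑ i ∈ T, x i) - B) * u T) := by
    intro T
    have hs := Finset.sum_add_sum_compl T (fun i => a i / d i)
    have hBk : B / κ = 1 + ∑ i, a i / d i := by rw [hBeq]; field_simp
    have e3 : (∑ i ∈ T, x i) / κ - ∑ i ∈ T, a i / d i
        = (∑ i ∈ T, x i) / κ - B/κ + (1 + ∑ i ∈ Tᶜ, a i / d i) := by
      rw [hBk]
      linarith
    rw [e3]
    field_simp
    ring
  calc ∑ S : Finset (Fin n), pmass n p S *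
        ((∑ i ∈ S, (a i + d i)) + (∑ i ∈ Sᶜ, (a i / d i) * (u (insert i S) - u S)) - u S)
      = ∑ S : Finset (Fin n), (pmass n p S * (∑ i ∈ S, (a i + d i))
          + (∑ i ∈ Sᶜ, pmass n p S * (a i / d i) * u (insert i S))
          - pmass n p S * ((1 + ∑ i ∈ Sᶜ, a i / d i) * u S)) :=
        Finset.sum_congr rfl fun S _ => step1 S
    _ = (∑ S : Finset (Fin n), pmass n p S * (∑ i ∈ S, (a i + d i)))
          + (∑ S : Finset (Fin n), ∑ i ∈ Sᶜ, pmass n p S * (a i / d i) * u (insert i S))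
          - ∑ S : Finset (Fin n), pmass n p S * ((1 + ∑ i ∈ Sᶜ, a i / d i) * u S) := by
        rw [Finset.sum_sub_distrib, Finset.sum_add_distrib]
    _ = (∑ S : Finset (Fin n), pmass n p S * (∑ i ∈ S, (a i + d i)))
          + ((∑ T : Finset (Fin n), pmass n p T * ((∑ i ∈ T, x i)/κ - ∑ i ∈ T, a i / d i) * u T)
          - ∑ T : Finset (Fin n), pmass n p T * ((1 + ∑ i ∈ Tᶜ, a i / d i) * u T)) := by
        rw [mid, Finset.sum_congr rfl fun T _ => mid2 T]
        ring
    _ = (∑ S : Finset (Fin n), pmass n p S * (∑ i ∈ S, (a i + d i)))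
          + ∑ T : Finset (Fin n), (1/κ) * (pmass n p T * ((∑ i ∈ T, x i) - B) * u T) := by
        rw [← Finset.sum_sub_distrib, Finset.sum_congr rfl fun T _ => final T]
    _ = (∑ S : Finset (Fin n), pmass n p S * (∑ i ∈ S, (a i + d i)))
        + (1/κ) * ∑ T : Finset (Fin n), pmass n p T * ((∑ i ∈ T, x i) - B) * u T := by
        rw [Finset.mul_sum]

noncomputable def psiF (n : ℕ) (d p x : Fin n → ℝ) (B : ℝ) (c : ℝ) : ℝ :=
  pmass n p Finset.univ * ((∑ i, x i) - B) * c
    + ∑ T ∈ (Finset.univ : Finset (Finset (Fin n))).erase Finset.univ,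
        pmass n p T * ((∑ i ∈ T, x i) - B) * max (c - cost n d T) 0

lemma I3 (d p x : Fin n → ℝ) (B : ℝ) (u : Finset (Fin n) → ℝ) :
    ∑ T : Finset (Fin n), pmass n p T * ((∑ i ∈ T, x i) - B) * u T
      = psiF n d p x B (u Finset.univ)
        - ∑ T ∈ (Finset.univ : Finset (Finset (Fin n))).erase Finset.univ,
            (pmass n p T * (B - ∑ i ∈ T, x i)) * (u T - max (u Finset.univ - cost n d T) 0) := by
  rw [← Finset.add_sum_erase _ (fun T => pmass n p T * ((∑ i ∈ T, x i) - B) * u T)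
      (Finset.mem_univ Finset.univ), psiF, add_sub_assoc, ← Finset.sum_sub_distrib]
  congr 1
  exact Finset.sum_congr rfl fun T _ => by ring

lemma G2_nonneg (d p x : Fin n → ℝ) (B : ℝ) (hp : ∀ i, p i ∈ Set.Ioo (0:ℝ) 1)
    (hneg : ∀ S : Finset (Fin n), S ≠ Finset.univ → ∑ i ∈ S, x i < B)
    (u : Finset (Fin n) → ℝ) (hu0 : ∀ S, 0 ≤ u S)
    (htel : ∀ S, u Finset.univ ≤ u S + cost n d S) :
    (∀ T ∈ (Finset.univ : Finset (Finset (Fin n))).erase Finset.univ,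
      0 ≤ (pmass n p T * (B - ∑ i ∈ T, x i)) * (u T - max (u Finset.univ - cost n d T) 0)) := by
  intro T hT
  have hTne : T ≠ Finset.univ := (Finset.mem_erase.mp hT).1
  have h1 : 0 < pmass n p T * (B - ∑ i ∈ T, x i) :=
    mul_pos (pmass_pos p hp T) (by linarith [hneg T hTne])
  apply mul_nonneg h1.le
  have h2 := htel T
  have h3 := hu0 T
  have : max (u Finset.univ - cost n d T) 0 ≤ u T := max_le (by linarith) h3
  linarith

lemma filter_le_eq (dd : Fin n → ℝ) (cstar : ℝ) :
    (Finset.univ : Finset (Finset (Fin n))).filter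
        (fun S => S ≠ Finset.univ ∧ cost n dd S ≤ cstar)
      = ((Finset.univ : Finset (Finset (Fin n))).erase Finset.univ).filter
        (fun S => cost n dd S ≤ cstar) := by
  ext T
  simp only [Finset.mem_filter, Finset.mem_erase, Finset.mem_univ, true_and, and_comm]

lemma filter_lt_eq (dd : Fin n → ℝ) (cstar : ℝ) :
    (Finset.univ : Finset (Finset (Fin n))).filter
        (fun S => S ≠ Finset.univ ∧ cost n dd S < cstar)
      = ((Finset.univ : Finset (Finset (Fin n))).erase Finset.univ).filter
        (fun S => cost n dd S < cstar) := by
  ext T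
  simp only [Finset.mem_filter, Finset.mem_erase, Finset.mem_univ, true_and, and_comm]

lemma psi_strict (d p x : Fin n → ℝ) (B cstar : ℝ)
    (hp : ∀ i, p i ∈ Set.Ioo (0:ℝ) 1)
    (hneg : ∀ S : Finset (Fin n), S ≠ Finset.univ → ∑ i ∈ S, x i < B)
    (hsat1 :
      ∑ S ∈ Finset.univ.filter
          (fun S : Finset (Fin n) => S ≠ Finset.univ ∧ cost n d S < cstar),
          pmass n p S * (B - ∑ i ∈ S, x i)
        < pmass n p Finset.univ * ((∑ i, x i) - B))
    (hsat2 :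
      pmass n p Finset.univ * ((∑ i, x i) - B)
        < ∑ S ∈ Finset.univ.filter
            (fun S : Finset (Fin n) => S ≠ Finset.univ ∧ cost n d S ≤ cstar),
            pmass n p S * (B - ∑ i ∈ S, x i))
    {c : ℝ} (hne : c ≠ cstar) :
    psiF n d p x B c < psiF n d p x B cstar := by
  set Wu := pmass n p Finset.univ * ((∑ i, x i) - B) with hWu
  rcases lt_or_gt_of_ne hne with hlt | hgt
  · -- c < cstar : use hsat1
    rw [filter_lt_eq] at hsat1
    have key : ∑ T ∈ (Finset.univ : Finset (Finset (Fin n))).erase Finset.univ,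
        pmass n p T * ((∑ i ∈ T, x i) - B) * (max (cstar - cost n d T) 0 - max (c - cost n d T) 0)
        ≥ -((cstar - c) * ∑ S ∈ ((Finset.univ : Finset (Finset (Fin n))).erase Finset.univ).filter
            (fun S => cost n d S < cstar), pmass n p S * (B - ∑ i ∈ S, x i)) := by
      have e1 : ∑ T ∈ (Finset.univ : Finset (Finset (Fin n))).erase Finset.univ,
          pmass n p T * ((∑ i ∈ T, x i) - B) * (max (cstar - cost n d T) 0 - max (c - cost n d T) 0)
          = -∑ T ∈ (Finset.univ : Finset (Finset (Fin n))).erase Finset.univ,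
            (pmass n p T * (B - ∑ i ∈ T, x i)) * (max (cstar - cost n d T) 0 - max (c - cost n d T) 0) := by
        rw [← Finset.sum_neg_distrib]
        exact Finset.sum_congr rfl fun T _ => by ring
      rw [e1, ge_iff_le, neg_le_neg_iff]
      have e2 : ∑ T ∈ (Finset.univ : Finset (Finset (Fin n))).erase Finset.univ,
          (pmass n p T * (B - ∑ i ∈ T, x i)) * (max (cstar - cost n d T) 0 - max (c - cost n d T) 0)
          = ∑ T ∈ ((Finset.univ : Finset (Finset (Fin n))).erase Finset.univ).filter
              (fun S => cost n d S < cstar),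
            (pmass n p T * (B - ∑ i ∈ T, x i)) * (max (cstar - cost n d T) 0 - max (c - cost n d T) 0) := by
        symm
        apply Finset.sum_subset (Finset.filter_subset _ _)
        intro T hT hTf
        have : ¬ cost n d T < cstar := by
          intro hc; exact hTf (Finset.mem_filter.mpr ⟨hT, hc⟩)
        have hc : cstar ≤ cost n d T := not_lt.mp this
        have hm1 : max (cstar - cost n d T) 0 = 0 := max_eq_right (by linarith)
        have hm2 : max (c - cost n d T) 0 = 0 := max_eq_right (by linarith)
        rw [hm1, hm2]
        ring
      rw [e2, Finset.mul_sum]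
      apply Finset.sum_le_sum
      intro T hT
      have hTne : T ≠ Finset.univ := (Finset.mem_erase.mp (Finset.mem_filter.mp hT).1).1
      have hpos : 0 < pmass n p T * (B - ∑ i ∈ T, x i) :=
        mul_pos (pmass_pos p hp T) (by linarith [hneg T hTne])
      have hmd : max (cstar - cost n d T) 0 - max (c - cost n d T) 0 ≤ cstar - c := by
        simp only [max_def]; split_ifs <;> linarith
      calc (pmass n p T * (B - ∑ i ∈ T, x i)) * (max (cstar - cost n d T) 0 - max (c - cost n d T) 0)
          ≤ (pmass n p T * (B - ∑ i ∈ T, x i)) * (cstar - c) := by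
            exact mul_le_mul_of_nonneg_left hmd hpos.le
        _ = (cstar - c) * (pmass n p T * (B - ∑ i ∈ T, x i)) := by ring
    rw [psiF, psiF]
    have hfin : -((cstar - c) * ∑ S ∈ ((Finset.univ : Finset (Finset (Fin n))).erase Finset.univ).filter
            (fun S => cost n d S < cstar), pmass n p S * (B - ∑ i ∈ S, x i))
        > -((cstar - c) * Wu) := by
      have hc' : 0 < cstar - c := by linarith
      have := mul_lt_mul_of_pos_left hsat1 hc'
      linarith
    have expand : ∑ T ∈ (Finset.univ : Finset (Finset (Fin n))).erase Finset.univ,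
        pmass n p T * ((∑ i ∈ T, x i) - B) * max (cstar - cost n d T) 0
        - ∑ T ∈ (Finset.univ : Finset (Finset (Fin n))).erase Finset.univ,
        pmass n p T * ((∑ i ∈ T, x i) - B) * max (c - cost n d T) 0
        = ∑ T ∈ (Finset.univ : Finset (Finset (Fin n))).erase Finset.univ,
        pmass n p T * ((∑ i ∈ T, x i) - B) * (max (cstar - cost n d T) 0 - max (c - cost n d T) 0) := by
      rw [← Finset.sum_sub_distrib]
      exact Finset.sum_congr rfl fun T _ => by ring
    have := key
    nlinarith [this, hfin, expand]
  · -- cstar < c : use hsat2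
    rw [filter_le_eq] at hsat2
    have e1 : ∑ T ∈ (Finset.univ : Finset (Finset (Fin n))).erase Finset.univ,
        pmass n p T * ((∑ i ∈ T, x i) - B) * (max (cstar - cost n d T) 0 - max (c - cost n d T) 0)
        = ∑ T ∈ (Finset.univ : Finset (Finset (Fin n))).erase Finset.univ,
          (pmass n p T * (B - ∑ i ∈ T, x i)) * (max (c - cost n d T) 0 - max (cstar - cost n d T) 0) := by
      exact Finset.sum_congr rfl fun T _ => by ring
    have step : ∑ T ∈ ((Finset.univ : Finset (Finset (Fin n))).erase Finset.univ).filter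
          (fun S => cost n d S ≤ cstar),
          (pmass n p T * (B - ∑ i ∈ T, x i)) * (max (c - cost n d T) 0 - max (cstar - cost n d T) 0)
        ≤ ∑ T ∈ (Finset.univ : Finset (Finset (Fin n))).erase Finset.univ,
          (pmass n p T * (B - ∑ i ∈ T, x i)) * (max (c - cost n d T) 0 - max (cstar - cost n d T) 0) := by
      apply Finset.sum_le_sum_of_subset_of_nonneg (Finset.filter_subset _ _)
      intro T hT _
      have hTne : T ≠ Finset.univ := (Finset.mem_erase.mp hT).1
      have hpos : 0 < pmass n p T * (B - ∑ i ∈ T, x i) :=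
        mul_pos (pmass_pos p hp T) (by linarith [hneg T hTne])
      have hmd : 0 ≤ max (c - cost n d T) 0 - max (cstar - cost n d T) 0 := by
        simp only [max_def]; split_ifs <;> linarith
      exact mul_nonneg hpos.le hmd
    have oneach : ∑ T ∈ ((Finset.univ : Finset (Finset (Fin n))).erase Finset.univ).filter
          (fun S => cost n d S ≤ cstar),
          (pmass n p T * (B - ∑ i ∈ T, x i)) * (max (c - cost n d T) 0 - max (cstar - cost n d T) 0)
        = (c - cstar) * ∑ T ∈ ((Finset.univ : Finset (Finset (Fin n))).erase Finset.univ).filter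
          (fun S => cost n d S ≤ cstar), pmass n p T * (B - ∑ i ∈ T, x i) := by
      rw [Finset.mul_sum]
      refine Finset.sum_congr rfl fun T hT => ?_
      have hc : cost n d T ≤ cstar := (Finset.mem_filter.mp hT).2
      have hm1 : max (c - cost n d T) 0 = c - cost n d T := max_eq_left (by linarith)
      have hm2 : max (cstar - cost n d T) 0 = cstar - cost n d T := max_eq_left (by linarith)
      rw [hm1, hm2]
      ring
    have hfin : (c - cstar) * Wu < (c - cstar) * ∑ T ∈
          ((Finset.univ : Finset (Finset (Fin n))).erase Finset.univ).filter
          (fun S => cost n d S ≤ cstar), pmass n p T * (B - ∑ i ∈ T, x i) :=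
      mul_lt_mul_of_pos_left hsat2 (by linarith)
    have expand : ∑ T ∈ (Finset.univ : Finset (Finset (Fin n))).erase Finset.univ,
        pmass n p T * ((∑ i ∈ T, x i) - B) * max (cstar - cost n d T) 0
        - ∑ T ∈ (Finset.univ : Finset (Finset (Fin n))).erase Finset.univ,
        pmass n p T * ((∑ i ∈ T, x i) - B) * max (c - cost n d T) 0
        = ∑ T ∈ (Finset.univ : Finset (Finset (Fin n))).erase Finset.univ,
        pmass n p T * ((∑ i ∈ T, x i) - B) * (max (cstar - cost n d T) 0 - max (c - cost n d T) 0) := by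
      rw [← Finset.sum_sub_distrib]
      exact Finset.sum_congr rfl fun T _ => by ring
    rw [psiF, psiF]
    nlinarith [e1, step, oneach, hfin, expand]


lemma psi_le (d p x : Fin n → ℝ) (B cstar : ℝ)
    (hp : ∀ i, p i ∈ Set.Ioo (0:ℝ) 1)
    (hneg : ∀ S : Finset (Fin n), S ≠ Finset.univ → ∑ i ∈ S, x i < B)
    (hsat1 :
      ∑ S ∈ Finset.univ.filter
          (fun S : Finset (Fin n) => S ≠ Finset.univ ∧ cost n d S < cstar),
          pmass n p S * (B - ∑ i ∈ S, x i)
        < pmass n p Finset.univ * ((∑ i, x i) - B))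
    (hsat2 :
      pmass n p Finset.univ * ((∑ i, x i) - B)
        < ∑ S ∈ Finset.univ.filter
            (fun S : Finset (Fin n) => S ≠ Finset.univ ∧ cost n d S ≤ cstar),
            pmass n p S * (B - ∑ i ∈ S, x i))
    (c : ℝ) : psiF n d p x B c ≤ psiF n d p x B cstar := by
  by_cases h : c = cstar
  · rw [h]
  · exact (psi_strict d p x B cstar hp hneg hsat1 hsat2 h).le

lemma G2_zero (d p x : Fin n → ℝ) (B : ℝ) (hp : ∀ i, p i ∈ Set.Ioo (0:ℝ) 1)
    (hneg : ∀ S : Finset (Fin n), S ≠ Finset.univ → ∑ i ∈ S, x i < B)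
    (u : Finset (Fin n) → ℝ) (hu0 : ∀ S, 0 ≤ u S)
    (htel : ∀ S, u Finset.univ ≤ u S + cost n d S)
    (hz : ∑ T ∈ (Finset.univ : Finset (Finset (Fin n))).erase Finset.univ,
            (pmass n p T * (B - ∑ i ∈ T, x i)) * (u T - max (u Finset.univ - cost n d T) 0) = 0) :
    ∀ T : Finset (Fin n), T ≠ Finset.univ → u T = max (u Finset.univ - cost n d T) 0 := by
  intro T hT
  have hmem : T ∈ (Finset.univ : Finset (Finset (Fin n))).erase Finset.univ :=
    Finset.mem_erase.mpr ⟨hT, Finset.mem_univ T⟩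
  have hterm := (Finset.sum_eq_zero_iff_of_nonneg
    (G2_nonneg d p x B hp hneg u hu0 htel)).mp hz T hmem
  have h1 : 0 < pmass n p T * (B - ∑ i ∈ T, x i) :=
    mul_pos (pmass_pos p hp T) (by linarith [hneg T hT])
  have := (mul_eq_zero.mp hterm).resolve_left h1.ne'
  linarith

lemma g1_star_zero (a d : Fin n → ℝ) (p : Fin n → ℝ) (hd : ∀ i, 0 < d i) (cstar : ℝ) :
    ∑ S : Finset (Fin n), pmass n p S *
        ((∑ i ∈ S, (a i + d i) * (1 - qstar n d cstar S i))
          + ∑ i ∈ Sᶜ, ((a i / d i) * (ustar n d cstar (insert i S) - ustar n d cstar S)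
              - a i * qstar n d cstar S i)) = 0 := by
  apply Finset.sum_eq_zero
  intro S _
  have h1 : ∑ i ∈ S, (a i + d i) * (1 - qstar n d cstar S i) = 0 := by
    apply Finset.sum_eq_zero
    intro i hi
    rw [qstar, if_pos hi]
    ring
  have h2 : ∑ i ∈ Sᶜ, ((a i / d i) * (ustar n d cstar (insert i S) - ustar n d cstar S)
      - a i * qstar n d cstar S i) = 0 := by
    apply Finset.sum_eq_zero
    intro i hi
    have hiS : i ∉ S := by simpa using hi
    rw [qstar, if_neg hiS, div_mul_eq_mul_div, mul_div_assoc]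
    ring
  rw [h1, h2]
  ring

lemma master (a d p x : Fin n → ℝ) (κ B : ℝ)
    (ha : ∀ i, 0 < a i) (hd : ∀ i, 0 < d i) (hp : ∀ i, p i ∈ Set.Ioo (0:ℝ) 1) (hκ : 0 < κ)
    (hBeq : B = κ * (1 + ∑ i, a i / d i))
    (hxeq : ∀ i, x i = κ * a i / (p i * d i))
    (u : Finset (Fin n) → ℝ) (q : Finset (Fin n) → Fin n → ℝ) :
    LP1Obj n a d p u q
      = (∑ S : Finset (Fin n), pmass n p S * (∑ i ∈ S, (a i + d i)))
        + (1/κ) * psiF n d p x B (u Finset.univ)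
        - (1/κ) * (∑ T ∈ (Finset.univ : Finset (Finset (Fin n))).erase Finset.univ,
            (pmass n p T * (B - ∑ i ∈ T, x i)) * (u T - max (u Finset.univ - cost n d T) 0))
        - (∑ S : Finset (Fin n), pmass n p S *
            ((∑ i ∈ S, (a i + d i) * (1 - q S i))
              + ∑ i ∈ Sᶜ, ((a i / d i) * (u (insert i S) - u S) - a i * q S i))) := by
  rw [I1 a d p u q, I2 ha hd hp hκ hBeq hxeq u, I3 d p x B u]
  ring

end Stmt5

theorem stmt_5 (n : ℕ) (hn : 1 ≤ n) (a d p x : Fin n → ℝ) (κ B : ℝ)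
    (ha : ∀ i, 0 < a i) (hd : ∀ i, 0 < d i) (hp : ∀ i, p i ∈ Set.Ioo (0:ℝ) 1)
    (hx : ∀ i, 0 < x i) (hκ : 0 < κ)
    (hBeq : B = κ * (1 + ∑ i, a i / d i))
    (hxeq : ∀ i, x i = κ * a i / (p i * d i))
    (hpos : B < ∑ i, x i)
    (hneg : ∀ S : Finset (Fin n), S ≠ Finset.univ → ∑ i ∈ S, x i < B)
    (cstar : ℝ)
    (hcs : ∃ Sstar : Finset (Fin n), Sstar ≠ Finset.univ ∧ cstar = cost n d Sstar)
    (hsat1 :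
      ∑ S ∈ Finset.univ.filter
          (fun S : Finset (Fin n) => S ≠ Finset.univ ∧ cost n d S < cstar),
          pmass n p S * (B - ∑ i ∈ S, x i)
        < pmass n p Finset.univ * ((∑ i, x i) - B))
    (hsat2 :
      pmass n p Finset.univ * ((∑ i, x i) - B)
        < ∑ S ∈ Finset.univ.filter
            (fun S : Finset (Fin n) => S ≠ Finset.univ ∧ cost n d S ≤ cstar),
            pmass n p S * (B - ∑ i ∈ S, x i)) :
    ∃ q : Finset (Fin n) → Fin n → ℝ,
      LP1Feasible n a d (fun S => max (cstar - cost n d S) 0) q ∧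
      (∀ u' q', LP1Feasible n a d u' q' →
          LP1Obj n a d p u' q' ≤ LP1Obj n a d p (fun S => max (cstar - cost n d S) 0) q) ∧
      (∀ u' q', LP1Feasible n a d u' q' →
          LP1Obj n a d p u' q' = LP1Obj n a d p (fun S => max (cstar - cost n d S) 0) q →
          u' = (fun S => max (cstar - cost n d S) 0) ∧ q' = q) ∧
      max (cstar - cost n d Finset.univ) 0 = cstar := by
  classical
  obtain ⟨Sstar, hSne, hSc⟩ := hcs
  have hcs0 : 0 ≤ cstar := by
    rw [hSc, cost]
    exact Finset.sum_nonneg fun i _ => (hd i).le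
  have hUuniv : max (cstar - cost n d Finset.univ) 0 = cstar := by
    rw [Stmt5.cost_univ d, sub_zero]
    exact max_eq_left hcs0
  have hfeasU : LP1Feasible n a d (fun S => max (cstar - cost n d S) 0)
      (Stmt5.qstar n d cstar) := Stmt5.ustar_qstar_feasible a d hd cstar
  have hustar_univ : Stmt5.ustar n d cstar Finset.univ = cstar := hUuniv
  have hG2U : ∑ T ∈ (Finset.univ : Finset (Finset (Fin n))).erase Finset.univ,
      (pmass n p T * (B - ∑ i ∈ T, x i)) *
        (Stmt5.ustar n d cstar T
          - max (Stmt5.ustar n d cstar Finset.univ - cost n d T) 0) = 0 := by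
    apply Finset.sum_eq_zero
    intro T _
    rw [hustar_univ]
    have hz : Stmt5.ustar n d cstar T - max (cstar - cost n d T) 0 = 0 := by
      rw [Stmt5.ustar]; ring
    rw [hz, mul_zero]
  have hobjU : LP1Obj n a d p (fun S => max (cstar - cost n d S) 0) (Stmt5.qstar n d cstar)
      = (∑ S : Finset (Fin n), pmass n p S * (∑ i ∈ S, (a i + d i)))
        + (1/κ) * Stmt5.psiF n d p x B cstar := by
    have hm := Stmt5.master a d p x κ B ha hd hp hκ hBeq hxeq
      (Stmt5.ustar n d cstar) (Stmt5.qstar n d cstar)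
    rw [Stmt5.g1_star_zero a d p hd cstar, hG2U, hustar_univ] at hm
    simp at hm
    rw [one_div]
    exact hm
  have hκ' : (0:ℝ) < 1/κ := by positivity
  refine ⟨Stmt5.qstar n d cstar, hfeasU, ?_, ?_, hUuniv⟩
  · intro u' q' hf
    have hm := Stmt5.master a d p x κ B ha hd hp hκ hBeq hxeq u' q'
    have hG1 := Stmt5.G1_nonneg ha hd hp hf
    have htel : ∀ S, u' Finset.univ ≤ u' S + cost n d S := fun S =>
      Stmt5.telescope d u' (fun S i hi => Stmt5.adj_down hd hf hi) Sᶜ.card S le_rfl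
    have hG2 : 0 ≤ ∑ T ∈ (Finset.univ : Finset (Finset (Fin n))).erase Finset.univ,
        (pmass n p T * (B - ∑ i ∈ T, x i)) *
          (u' T - max (u' Finset.univ - cost n d T) 0) :=
      Finset.sum_nonneg (Stmt5.G2_nonneg d p x B hp hneg u' hf.2.1 htel)
    have hpsi := Stmt5.psi_le d p x B cstar hp hneg hsat1 hsat2 (u' Finset.univ)
    rw [hobjU, hm]
    have h2 := mul_nonneg hκ'.le hG2
    have h3 := mul_le_mul_of_nonneg_left hpsi hκ'.le
    linarith
  · intro u' q' hf heq
    have hm := Stmt5.master a d p x κ B ha hd hp hκ hBeq hxeq u' q'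
    have hG1 := Stmt5.G1_nonneg ha hd hp hf
    have htel : ∀ S, u' Finset.univ ≤ u' S + cost n d S := fun S =>
      Stmt5.telescope d u' (fun S i hi => Stmt5.adj_down hd hf hi) Sᶜ.card S le_rfl
    have hG2 : 0 ≤ ∑ T ∈ (Finset.univ : Finset (Finset (Fin n))).erase Finset.univ,
        (pmass n p T * (B - ∑ i ∈ T, x i)) *
          (u' T - max (u' Finset.univ - cost n d T) 0) :=
      Finset.sum_nonneg (Stmt5.G2_nonneg d p x B hp hneg u' hf.2.1 htel)
    have hpsi := Stmt5.psi_le d p x B cstar hp hneg hsat1 hsat2 (u' Finset.univ)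
    rw [hobjU, hm] at heq
    have h2 := mul_nonneg hκ'.le hG2
    have h3 := mul_le_mul_of_nonneg_left hpsi hκ'.le
    have hψeq : (1/κ) * Stmt5.psiF n d p x B (u' Finset.univ)
        = (1/κ) * Stmt5.psiF n d p x B cstar := by linarith
    have hG2z : ∑ T ∈ (Finset.univ : Finset (Finset (Fin n))).erase Finset.univ,
        (pmass n p T * (B - ∑ i ∈ T, x i)) *
          (u' T - max (u' Finset.univ - cost n d T) 0) = 0 := by
      have h4 : (1/κ) * (∑ T ∈ (Finset.univ : Finset (Finset (Fin n))).erase Finset.univ,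
          (pmass n p T * (B - ∑ i ∈ T, x i)) *
            (u' T - max (u' Finset.univ - cost n d T) 0)) = 0 := by linarith
      have := mul_eq_zero.mp h4
      rcases this with h | h
      · exact absurd h hκ'.ne'
      · exact h
    have hG1z : ∑ S : Finset (Fin n), pmass n p S *
          ((∑ i ∈ S, (a i + d i) * (1 - q' S i))
            + ∑ i ∈ Sᶜ, ((a i / d i) * (u' (insert i S) - u' S) - a i * q' S i)) = 0 := by
      linarith
    have huuniv : u' Finset.univ = cstar := by
      by_contra hne
      have := Stmt5.psi_strict d p x B cstar hp hneg hsat1 hsat2 hne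
      have h5 := mul_lt_mul_of_pos_left this hκ'
      linarith
    have hu' : u' = fun S => max (cstar - cost n d S) 0 := by
      funext T
      by_cases hT : T = Finset.univ
      · subst hT
        show u' Finset.univ = max (cstar - cost n d Finset.univ) 0
        rw [hUuniv]
        exact huuniv
      · have h6 := Stmt5.G2_zero d p x B hp hneg u' hf.2.1 htel hG2z T hT
        rw [huuniv] at h6
        exact h6
    refine ⟨hu', ?_⟩
    funext S i
    have hext := Stmt5.G1_zero ha hd hp hf hG1z S i
    by_cases hi : i ∈ S
    · rw [Stmt5.qstar, if_pos hi]
      exact hext.1 hi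
    · rw [Stmt5.qstar, if_neg hi, hext.2 hi, hu']
      rfl
end

section
/- Let w_1,…,w_n be positive integers, T a positive integer, and ℓ ∈ {1,…,n}. For m ∈ {1,…,ℓ} set count(m) = #{ S ⊆ [n] : |S| = m and Σ_{i∈S} w_i ≤ T }. Define the list 𝔠_ℓ = (c^ℓ_1,…,c^ℓ_{n+ℓ}) by c^ℓ_i = 4n·w_i for 1 ≤ i ≤ n, c^ℓ_{n+1} = 4nT + 2n, and c^ℓ_i = 1 for n+2 ≤ i ≤ n+ℓ, and let S_ℓ = {n+1, n+2, …, n+ℓ}. Then lexr_{𝔠_ℓ}(S_ℓ) = 1 + Σ_{m=1}^{ℓ} count(m)·C(ℓ−1, ℓ−m), where C denotes the binomial coefficient. -/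
open Finset
open scoped BigOperators Classical

/-- `S' ≤_lex S`: either `S' = S` or the largest element of the symmetric
difference `S' △ S` lies in `S`. -/
def lexLe (S' S : Finset ℕ) : Prop :=
  S' = S ∨ ∃ m ∈ (S' \ S) ∪ (S \ S'), m ∈ S ∧ ∀ b ∈ (S' \ S) ∪ (S \ S'), b ≤ m

/-- The lexicographic rank of `S` among the subsets of `ground`, with respect to the
weights `c`. -/
noncomputable def lexrank (c : ℕ → ℕ) (ground S : Finset ℕ) : ℕ :=
  (ground.powerset.filter (fun S' : Finset ℕ =>
    S'.card = S.card ∧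
      (∑ i ∈ S', c i < ∑ i ∈ S, c i ∨
        (∑ i ∈ S', c i = ∑ i ∈ S, c i ∧ lexLe S' S)))).card

/-- The collection `𝔠_ℓ`: `c i = 4·n·w i` for `1 ≤ i ≤ n`, `c (n+1) = 4·n·T + 2·n`,
and `c i = 1` for `n+2 ≤ i ≤ n+ℓ`. -/
def cColl (n T : ℕ) (w : ℕ → ℕ) : ℕ → ℕ :=
  fun i => if i ≤ n then 4 * n * w i else if i = n + 1 then 4 * n * T + 2 * n else 1

/-- `count(m)`: the number of subsets `S ⊆ [n]` of size `m` with `Σ_{i∈S} w i ≤ T`. -/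
def countW (n T : ℕ) (w : ℕ → ℕ) (m : ℕ) : ℕ :=
  (((Finset.Icc 1 n).powerset).filter
    (fun S : Finset ℕ => S.card = m ∧ ∑ i ∈ S, w i ≤ T)).card

/-! ### Auxiliary lemmas -/

lemma aux_sum_c1 (n T : ℕ) (w : ℕ → ℕ) {A : Finset ℕ} (hA : A ⊆ Finset.Icc 1 n) :
    ∑ i ∈ A, cColl n T w i = 4 * n * ∑ i ∈ A, w i := by
  rw [Finset.mul_sum]
  refine Finset.sum_congr rfl fun i hi => ?_
  have h : i ≤ n := (Finset.mem_Icc.mp (hA hi)).2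
  simp [cColl, h]

lemma aux_sum_c2 (n ℓ T : ℕ) (w : ℕ → ℕ) {B : Finset ℕ}
    (hB : B ⊆ Finset.Icc (n+2) (n+ℓ)) :
    ∑ i ∈ B, cColl n T w i = B.card := by
  rw [Finset.card_eq_sum_ones]
  refine Finset.sum_congr rfl fun i hi => ?_
  have h := Finset.mem_Icc.mp (hB hi)
  have h1 : ¬ i ≤ n := by omega
  have h2 : i ≠ n + 1 := by omega
  simp [cColl, h1, h2]

lemma aux_disj (n ℓ : ℕ) : Disjoint (Finset.Icc 1 n) (Finset.Icc (n+2) (n+ℓ)) := by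
  rw [Finset.disjoint_left]
  intro a ha hb
  have h1 := Finset.mem_Icc.mp ha
  have h2 := Finset.mem_Icc.mp hb
  omega

lemma aux_inter1 (n ℓ : ℕ) {A B : Finset ℕ} (hA : A ⊆ Finset.Icc 1 n)
    (hB : B ⊆ Finset.Icc (n+2) (n+ℓ)) :
    (A ∪ B) ∩ Finset.Icc 1 n = A := by
  ext a
  simp only [Finset.mem_inter, Finset.mem_union]
  constructor
  · rintro ⟨h1 | h1, h2⟩
    · exact h1
    · exact absurd h2 (Finset.disjoint_right.mp (aux_disj n ℓ) (hB h1))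
  · intro h; exact ⟨Or.inl h, hA h⟩

lemma aux_inter2 (n ℓ : ℕ) {A B : Finset ℕ} (hA : A ⊆ Finset.Icc 1 n)
    (hB : B ⊆ Finset.Icc (n+2) (n+ℓ)) :
    (A ∪ B) ∩ Finset.Icc (n+2) (n+ℓ) = B := by
  ext a
  simp only [Finset.mem_inter, Finset.mem_union]
  constructor
  · rintro ⟨h1 | h1, h2⟩
    · exact absurd h2 (Finset.disjoint_left.mp (aux_disj n ℓ) (hA h1))
    · exact h1
  · intro h; exact ⟨Or.inr h, hB h⟩

lemma aux_decomp (n ℓ : ℕ) {S' : Finset ℕ} (hsub : S' ⊆ Finset.Icc 1 (n+ℓ))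
    (hn1 : n+1 ∉ S') :
    S' = (S' ∩ Finset.Icc 1 n) ∪ (S' ∩ Finset.Icc (n+2) (n+ℓ)) := by
  ext a
  simp only [Finset.mem_union, Finset.mem_inter, Finset.mem_Icc]
  constructor
  · intro h
    have hg := Finset.mem_Icc.mp (hsub h)
    have hne : a ≠ n + 1 := fun he => hn1 (he ▸ h)
    rcases le_or_gt a n with h' | h'
    · exact Or.inl ⟨h, by omega⟩
    · exact Or.inr ⟨h, by omega⟩
  · rintro (⟨h, _⟩ | ⟨h, _⟩) <;> exact h

lemma aux_card_split (n ℓ : ℕ) {S' : Finset ℕ} (hsub : S' ⊆ Finset.Icc 1 (n+ℓ))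
    (hn1 : n+1 ∉ S') :
    S'.card = (S' ∩ Finset.Icc 1 n).card + (S' ∩ Finset.Icc (n+2) (n+ℓ)).card := by
  conv_lhs => rw [aux_decomp n ℓ hsub hn1]
  exact Finset.card_union_of_disjoint
    ((aux_disj n ℓ).mono Finset.inter_subset_right Finset.inter_subset_right)

lemma aux_sum_split (n ℓ T : ℕ) (w : ℕ → ℕ) {S' : Finset ℕ}
    (hsub : S' ⊆ Finset.Icc 1 (n+ℓ)) (hn1 : n+1 ∉ S') :
    ∑ i ∈ S', cColl n T w i
      = 4 * n * (∑ i ∈ S' ∩ Finset.Icc 1 n, w i)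
        + (S' ∩ Finset.Icc (n+2) (n+ℓ)).card := by
  conv_lhs => rw [aux_decomp n ℓ hsub hn1]
  rw [Finset.sum_union
    ((aux_disj n ℓ).mono Finset.inter_subset_right Finset.inter_subset_right),
    aux_sum_c1 n T w Finset.inter_subset_right,
    aux_sum_c2 n ℓ T w Finset.inter_subset_right]

lemma aux_sum_S0 (n ℓ T : ℕ) (w : ℕ → ℕ) (hℓ1 : 1 ≤ ℓ) :
    ∑ i ∈ Finset.Icc (n+1) (n+ℓ), cColl n T w i = 4 * n * T + 2 * n + (ℓ - 1) := by
  have hins : Finset.Icc (n+1) (n+ℓ) = insert (n+1) (Finset.Icc (n+2) (n+ℓ)) := by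
    ext a; simp only [Finset.mem_insert, Finset.mem_Icc]; omega
  have hnot : n+1 ∉ Finset.Icc (n+2) (n+ℓ) := by simp [Finset.mem_Icc]
  rw [hins, Finset.sum_insert hnot, aux_sum_c2 n ℓ T w (le_refl _)]
  have h1 : cColl n T w (n+1) = 4 * n * T + 2 * n := by simp [cColl]
  have h2 : (Finset.Icc (n+2) (n+ℓ)).card = ℓ - 1 := by rw [Nat.card_Icc]; omega
  rw [h1, h2]

/-- The sets in the rank count not containing `n+1` are exactly those of size `ℓ`
whose `[1,n]`-part has `w`-weight at most `T`. -/
lemma aux_cond (n ℓ T : ℕ) (w : ℕ → ℕ)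
    (hw : ∀ i ∈ Finset.Icc 1 n, 0 < w i) (hℓ1 : 1 ≤ ℓ) (hℓn : ℓ ≤ n)
    {S' : Finset ℕ} (hsub : S' ⊆ Finset.Icc 1 (n+ℓ)) (hn1 : n+1 ∉ S')
    (hcard : S'.card = ℓ) :
    (∑ i ∈ S', cColl n T w i < ∑ i ∈ Finset.Icc (n+1) (n+ℓ), cColl n T w i ∨
      (∑ i ∈ S', cColl n T w i = ∑ i ∈ Finset.Icc (n+1) (n+ℓ), cColl n T w i ∧
        lexLe S' (Finset.Icc (n+1) (n+ℓ))))
      ↔ ∑ i ∈ S' ∩ Finset.Icc 1 n, w i ≤ T := by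
  have hn : 1 ≤ n := le_trans hℓ1 hℓn
  have hm : S'.card = (S' ∩ Finset.Icc 1 n).card + (S' ∩ Finset.Icc (n+2) (n+ℓ)).card :=
    aux_card_split n ℓ hsub hn1
  have hbound : (S' ∩ Finset.Icc (n+2) (n+ℓ)).card ≤ ℓ - 1 := by
    have := Finset.card_le_card (Finset.inter_subset_right
      (s₁ := S') (s₂ := Finset.Icc (n+2) (n+ℓ)))
    rwa [Nat.card_Icc, show n + ℓ + 1 - (n+2) = ℓ - 1 by omega] at this
  rw [aux_sum_split n ℓ T w hsub hn1, aux_sum_S0 n ℓ T w hℓ1]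
  constructor
  · intro h
    by_contra hTa
    push_neg at hTa
    have h4 : 4 * n * T + 4 * n ≤ 4 * n * (∑ i ∈ S' ∩ Finset.Icc 1 n, w i) := by
      have h5 := Nat.mul_le_mul_left (4 * n) hTa
      rwa [Nat.mul_succ] at h5
    rcases h with h | ⟨h, _⟩ <;> omega
  · intro h
    left
    have h4 : 4 * n * (∑ i ∈ S' ∩ Finset.Icc 1 n, w i) ≤ 4 * n * T :=
      Nat.mul_le_mul_left _ h
    omega

/-- Counting the sets of a fixed `[1,n]`-part size `m`. -/
lemma aux_piece (n ℓ T : ℕ) (w : ℕ → ℕ) (hℓ1 : 1 ≤ ℓ) (hℓn : ℓ ≤ n)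
    (m : ℕ) (hm : m ≤ ℓ) :
    ((Finset.Icc 1 (n+ℓ)).powerset.filter (fun S' : Finset ℕ =>
        (S'.card = ℓ ∧ n+1 ∉ S' ∧ ∑ i ∈ S' ∩ Finset.Icc 1 n, w i ≤ T) ∧
        (S' ∩ Finset.Icc 1 n).card = m)).card
      = countW n T w m * Nat.choose (ℓ - 1) (ℓ - m) := by
  have hI1G : Finset.Icc 1 n ⊆ Finset.Icc 1 (n+ℓ) := Finset.Icc_subset_Icc le_rfl (by omega)
  have hI2G : Finset.Icc (n+2) (n+ℓ) ⊆ Finset.Icc 1 (n+ℓ) :=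
    Finset.Icc_subset_Icc (by omega) le_rfl
  have hcard2 : (Finset.Icc (n+2) (n+ℓ)).card = ℓ - 1 := by rw [Nat.card_Icc]; omega
  rw [show countW n T w m * Nat.choose (ℓ - 1) (ℓ - m)
      = (((Finset.Icc 1 n).powerset.filter
            (fun A : Finset ℕ => A.card = m ∧ ∑ i ∈ A, w i ≤ T)) ×ˢ
          Finset.powersetCard (ℓ - m) (Finset.Icc (n+2) (n+ℓ))).card by
    rw [Finset.card_product, Finset.card_powersetCard, hcard2, countW]]
  apply Finset.card_nbij'
    (i := fun S' => (S' ∩ Finset.Icc 1 n, S' ∩ Finset.Icc (n+2) (n+ℓ)))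
    (j := fun p => p.1 ∪ p.2)
  · intro S' hS'
    simp only [Finset.mem_coe, Finset.mem_filter, Finset.mem_powerset] at hS'
    obtain ⟨hsub, ⟨hcard, hn1, hsum⟩, hAm⟩ := hS'
    have hsplit := aux_card_split n ℓ hsub hn1
    simp only [Finset.mem_coe, Finset.mem_product, Finset.mem_filter, Finset.mem_powerset,
      Finset.mem_powersetCard]
    exact ⟨⟨Finset.inter_subset_right, hAm, hsum⟩,
      Finset.inter_subset_right, by omega⟩
  · intro p hp
    simp only [Finset.mem_coe, Finset.mem_product, Finset.mem_filter, Finset.mem_powerset,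
      Finset.mem_powersetCard] at hp
    obtain ⟨⟨hA, hAm, hAsum⟩, hB, hBcard⟩ := hp
    have h1 := aux_inter1 n ℓ hA hB
    have h2 := aux_inter2 n ℓ hA hB
    have hdisj : Disjoint p.1 p.2 := (aux_disj n ℓ).mono hA hB
    simp only [Finset.mem_coe, Finset.mem_filter, Finset.mem_powerset]
    refine ⟨Finset.union_subset (hA.trans hI1G) (hB.trans hI2G),
      ⟨?_, ?_, ?_⟩, ?_⟩
    · rw [Finset.card_union_of_disjoint hdisj, hAm, hBcard]; omega
    · intro hmem
      rcases Finset.mem_union.mp hmem with h | h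
      · have := Finset.mem_Icc.mp (hA h); omega
      · have := Finset.mem_Icc.mp (hB h); omega
    · rw [h1]; exact hAsum
    · rw [h1]; exact hAm
  · intro S' hS'
    simp only [Finset.mem_coe, Finset.mem_filter, Finset.mem_powerset] at hS'
    exact (aux_decomp n ℓ hS'.1 hS'.2.1.2.1).symm
  · intro p hp
    simp only [Finset.mem_coe, Finset.mem_product, Finset.mem_filter, Finset.mem_powerset,
      Finset.mem_powersetCard] at hp
    obtain ⟨⟨hA, _, _⟩, hB, _⟩ := hp
    exact Prod.ext (aux_inter1 n ℓ hA hB) (aux_inter2 n ℓ hA hB)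

theorem stmt_6 (n ℓ T : ℕ) (w : ℕ → ℕ)
    (hw : ∀ i ∈ Finset.Icc 1 n, 0 < w i) (hT : 0 < T)
    (hℓ1 : 1 ≤ ℓ) (hℓn : ℓ ≤ n) :
    lexrank (cColl n T w) (Finset.Icc 1 (n + ℓ)) (Finset.Icc (n + 1) (n + ℓ))
      = 1 + ∑ m ∈ Finset.Icc 1 ℓ, countW n T w m * Nat.choose (ℓ - 1) (ℓ - m) := by
  have hn : 1 ≤ n := le_trans hℓ1 hℓn
  have hS0card : (Finset.Icc (n+1) (n+ℓ)).card = ℓ := by rw [Nat.card_Icc]; omega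
  have hS0sub : Finset.Icc (n+1) (n+ℓ) ⊆ Finset.Icc 1 (n+ℓ) :=
    Finset.Icc_subset_Icc (by omega) le_rfl
  set P : Finset ℕ → Prop := fun S' =>
    S'.card = (Finset.Icc (n+1) (n+ℓ)).card ∧
      (∑ i ∈ S', cColl n T w i < ∑ i ∈ Finset.Icc (n+1) (n+ℓ), cColl n T w i ∨
        (∑ i ∈ S', cColl n T w i = ∑ i ∈ Finset.Icc (n+1) (n+ℓ), cColl n T w i ∧
          lexLe S' (Finset.Icc (n+1) (n+ℓ)))) with hP
  rw [lexrank]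
  rw [← Finset.card_filter_add_card_filter_not
    (p := fun S' : Finset ℕ => n + 1 ∈ S')]
  congr 1
  -- the sets containing n+1: exactly S₀ itself
  · have : ((Finset.Icc 1 (n+ℓ)).powerset.filter P).filter
        (fun S' : Finset ℕ => n + 1 ∈ S') = {Finset.Icc (n+1) (n+ℓ)} := by
      ext S'
      simp only [Finset.mem_filter, Finset.mem_powerset, Finset.mem_singleton, hP]
      constructor
      · rintro ⟨⟨hsub, hcard, hcond⟩, hmem⟩
        -- remove n+1 and decompose
        set S'' := S'.erase (n+1) with hS''
        have hsub'' : S'' ⊆ Finset.Icc 1 (n+ℓ) := (Finset.erase_subset _ _).trans hsub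
        have hn1'' : n+1 ∉ S'' := Finset.notMem_erase _ _
        have hsum'' := aux_sum_split n ℓ T w hsub'' hn1''
        have hsumS' : ∑ i ∈ S', cColl n T w i
            = cColl n T w (n+1) + ∑ i ∈ S'', cColl n T w i := by
          rw [hS'', ← Finset.sum_insert (Finset.notMem_erase _ _),
            Finset.insert_erase hmem]
        have hc1 : cColl n T w (n+1) = 4 * n * T + 2 * n := by simp [cColl]
        have hbound : (S'' ∩ Finset.Icc (n+2) (n+ℓ)).card ≤ ℓ - 1 := by
          have := Finset.card_le_card (Finset.inter_subset_right
            (s₁ := S'') (s₂ := Finset.Icc (n+2) (n+ℓ)))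
          rwa [Nat.card_Icc, show n + ℓ + 1 - (n+2) = ℓ - 1 by omega] at this
        have hAempty : S'' ∩ Finset.Icc 1 n = ∅ := by
          rcases Finset.eq_empty_or_nonempty (S'' ∩ Finset.Icc 1 n) with he | ⟨i, hi⟩
          · exact he
          · exfalso
            have hwi : 1 ≤ w i := hw i (Finset.mem_of_mem_inter_right hi)
            have hle : w i ≤ ∑ j ∈ S'' ∩ Finset.Icc 1 n, w j :=
              Finset.single_le_sum (fun j _ => Nat.zero_le _) hi
            have h4 : 4 * n * 1 ≤ 4 * n * (∑ j ∈ S'' ∩ Finset.Icc 1 n, w j) :=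
              Nat.mul_le_mul_left _ (le_trans hwi hle)
            rw [aux_sum_S0 n ℓ T w hℓ1] at hcond
            rcases hcond with h | ⟨h, _⟩ <;> omega
        have hsubS0 : S' ⊆ Finset.Icc (n+1) (n+ℓ) := by
          intro x hx
          have hxg := Finset.mem_Icc.mp (hsub hx)
          rw [Finset.mem_Icc]
          by_contra hcontra
          have hxn : x ≤ n := by omega
          have hxne : x ≠ n + 1 := by omega
          have : x ∈ S'' ∩ Finset.Icc 1 n := by
            rw [Finset.mem_inter, Finset.mem_Icc, hS'']
            exact ⟨Finset.mem_erase.mpr ⟨hxne, hx⟩, by omega⟩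
          rw [hAempty] at this
          exact absurd this (Finset.notMem_empty x)
        exact Finset.eq_of_subset_of_card_le hsubS0 (by omega)
      · rintro rfl
        exact ⟨⟨hS0sub, rfl, Or.inr ⟨rfl, Or.inl rfl⟩⟩, by rw [Finset.mem_Icc]; omega⟩
    rw [this, Finset.card_singleton]
  -- the sets not containing n+1
  · rw [Finset.filter_filter]
    have hset : ((Finset.Icc 1 (n+ℓ)).powerset.filter
          (fun S' : Finset ℕ => P S' ∧ ¬ n + 1 ∈ S'))
        = (Finset.Icc 1 (n+ℓ)).powerset.filter (fun S' : Finset ℕ =>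
            S'.card = ℓ ∧ n+1 ∉ S' ∧ ∑ i ∈ S' ∩ Finset.Icc 1 n, w i ≤ T) := by
      apply Finset.filter_congr
      intro S' hS'
      rw [Finset.mem_powerset] at hS'
      simp only [hP, hS0card]
      constructor
      · rintro ⟨⟨hcard, hcond⟩, hn1⟩
        exact ⟨hcard, hn1, (aux_cond n ℓ T w hw hℓ1 hℓn hS' hn1 hcard).mp hcond⟩
      · rintro ⟨hcard, hn1, hsum⟩
        exact ⟨⟨hcard, (aux_cond n ℓ T w hw hℓ1 hℓn hS' hn1 hcard).mpr hsum⟩, hn1⟩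
    rw [hset]
    have hmem : ∀ S' ∈ (Finset.Icc 1 (n+ℓ)).powerset.filter (fun S' : Finset ℕ =>
          S'.card = ℓ ∧ n+1 ∉ S' ∧ ∑ i ∈ S' ∩ Finset.Icc 1 n, w i ≤ T),
        (S' ∩ Finset.Icc 1 n).card ∈ Finset.Icc 1 ℓ := by
      intro S' hS'
      simp only [Finset.mem_filter, Finset.mem_powerset] at hS'
      obtain ⟨hsub, hcard, hn1, _⟩ := hS'
      have hsplit := aux_card_split n ℓ hsub hn1
      have hbound : (S' ∩ Finset.Icc (n+2) (n+ℓ)).card ≤ ℓ - 1 := by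
        have := Finset.card_le_card (Finset.inter_subset_right
          (s₁ := S') (s₂ := Finset.Icc (n+2) (n+ℓ)))
        rwa [Nat.card_Icc, show n + ℓ + 1 - (n+2) = ℓ - 1 by omega] at this
      rw [Finset.mem_Icc]
      omega
    rw [Finset.card_eq_sum_card_fiberwise hmem]
    refine Finset.sum_congr rfl fun m hm => ?_
    rw [Finset.filter_filter]
    exact aux_piece n ℓ T w hℓ1 hℓn m (Finset.mem_Icc.mp hm).2
end

section
/- Let w_1,…,w_n be positive integers, T a positive integer, and ℓ ∈ {1,…,n}. Define c^ℓ_i = 4n·w_i for 1 ≤ i ≤ n, c^ℓ_{n+1} = 4nT + 2n, c^ℓ_i = 1 for n+2 ≤ i ≤ n+ℓ, and S_ℓ = {n+1,…,n+ℓ}. Then for every nonempty S ⊆ [n]: (1) if Σ_{i∈S} w_i > T then Σ_{i∈S} c^ℓ_i > Σ_{j∈S_ℓ} c^ℓ_j; (2) if Σ_{i∈S} w_i ≤ T then for all U ⊆ {n+2,…,n+ℓ}, Σ_{i∈S∪U} c^ℓ_i < Σ_{j∈S_ℓ} c^ℓ_j; (3) for all U ⊆ {n+2,…,n+ℓ},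 Σ_{i∈S∪U∪{n+1}} c^ℓ_i > Σ_{j∈S_ℓ} c^ℓ_j. -/
open Finset
open scoped BigOperators

theorem stmt_7 (n ℓ T : ℕ) (w : ℕ → ℕ)
    (hw : ∀ i ∈ Finset.Icc 1 n, 0 < w i) (hT : 0 < T)
    (hℓ1 : 1 ≤ ℓ) (hℓn : ℓ ≤ n)
    (S : Finset ℕ) (hS : S ⊆ Finset.Icc 1 n) (hSne : S.Nonempty) :
    (T < ∑ i ∈ S, w i →
      ∑ j ∈ Finset.Icc (n + 1) (n + ℓ), cColl n T w j < ∑ i ∈ S, cColl n T w i) ∧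
    (∑ i ∈ S, w i ≤ T →
      ∀ U ⊆ Finset.Icc (n + 2) (n + ℓ),
        ∑ i ∈ S ∪ U, cColl n T w i < ∑ j ∈ Finset.Icc (n + 1) (n + ℓ), cColl n T w j) ∧
    (∀ U ⊆ Finset.Icc (n + 2) (n + ℓ),
      ∑ j ∈ Finset.Icc (n + 1) (n + ℓ), cColl n T w j
        < ∑ i ∈ S ∪ U ∪ {n + 1}, cColl n T w i) := by
  have hn : 1 ≤ n := hℓ1.trans hℓn
  -- value of c on S
  have hsumS : ∑ i ∈ S, cColl n T w i = 4 * n * ∑ i ∈ S, w i := by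
    rw [Finset.mul_sum]
    refine Finset.sum_congr rfl fun i hi => ?_
    have := hS hi
    simp only [Finset.mem_Icc] at this
    simp [cColl, this.2]
  -- sum over the target set
  have hsplit : Finset.Icc (n + 1) (n + ℓ) = insert (n + 1) (Finset.Icc (n + 2) (n + ℓ)) := by
    ext j
    simp only [Finset.mem_Icc, Finset.mem_insert]
    omega
  have hones : ∀ U ⊆ Finset.Icc (n + 2) (n + ℓ), ∑ j ∈ U, cColl n T w j = U.card := by
    intro U hU
    rw [Finset.card_eq_sum_ones]
    refine Finset.sum_congr rfl fun j hj => ?_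
    have := hU hj
    simp only [Finset.mem_Icc] at this
    have h1 : ¬ j ≤ n := by omega
    have h2 : j ≠ n + 1 := by omega
    simp [cColl, h1, h2]
  have htarget : ∑ j ∈ Finset.Icc (n + 1) (n + ℓ), cColl n T w j
      = 4 * n * T + 2 * n + (ℓ - 1) := by
    rw [hsplit, Finset.sum_insert (by simp), hones _ (Finset.Subset.refl _)]
    have hc : cColl n T w (n + 1) = 4 * n * T + 2 * n := by
      simp [cColl]
    rw [hc, Nat.card_Icc]
    omega
  -- Σ w over S is ≥ 1
  have hwS : 1 ≤ ∑ i ∈ S, w i := by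
    obtain ⟨i, hi⟩ := hSne
    calc 1 ≤ w i := hw i (hS hi)
    _ ≤ ∑ i ∈ S, w i := Finset.single_le_sum (fun _ _ => Nat.zero_le _) hi
  refine ⟨?_, ?_, ?_⟩
  · intro h
    rw [htarget, hsumS]
    have : T + 1 ≤ ∑ i ∈ S, w i := h
    have hl : ℓ - 1 < 2 * n := by omega
    nlinarith [Nat.mul_le_mul_left (4 * n) this, hl]
  · intro h U hU
    have hdisj : Disjoint S U := by
      rw [Finset.disjoint_left]
      intro a ha hb
      have h1 := hS ha; have h2 := hU hb
      simp only [Finset.mem_Icc] at h1 h2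
      omega
    have h1 : ∑ i ∈ S ∪ U, cColl n T w i = ∑ i ∈ S, cColl n T w i + ∑ i ∈ U, cColl n T w i :=
      Finset.sum_union hdisj
    have h2 : U.card ≤ ℓ - 1 := by
      have := Finset.card_le_card hU
      rw [Nat.card_Icc] at this
      omega
    rw [htarget]
    have h3 := hones U hU
    have h4 : ∑ i ∈ S, cColl n T w i ≤ 4 * n * T := by
      rw [hsumS]; exact Nat.mul_le_mul_left _ h
    omega
  · intro U hU
    rw [htarget]
    have hnot : n + 1 ∉ S ∪ U := by
      simp only [Finset.mem_union]
      rintro (h | h)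
      · have := hS h; simp only [Finset.mem_Icc] at this; omega
      · have := hU h; simp only [Finset.mem_Icc] at this; omega
    have heq : S ∪ U ∪ {n + 1} = insert (n + 1) (S ∪ U) := by
      ext j; simp only [Finset.mem_union, Finset.mem_insert, Finset.mem_singleton]; tauto
    rw [heq, Finset.sum_insert hnot]
    have hc : cColl n T w (n + 1) = 4 * n * T + 2 * n := by simp [cColl]
    have h5 : ∑ i ∈ S, cColl n T w i ≤ ∑ i ∈ S ∪ U, cColl n T w i :=
      Finset.sum_le_sum_of_subset (Finset.subset_union_left)
    have h6 : 4 * n ≤ ∑ i ∈ S, cColl n T w i := by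
      rw [hsumS]; nlinarith [hwS]
    omega
end

section
/- Let c_1,…,c_n be positive integers and define d_i = 2^{n+1}·(c_i + Σ_{j=1}^n c_j) + 2^i for i ∈ [n]. Then for all T, T' ⊆ [n] with |T| = |T'|: Σ_{i∈T} d_i < Σ_{i∈T'} d_i if and only if ( Σ_{i∈T} c_i < Σ_{i∈T'} c_i, or ( Σ_{i∈T} c_i = Σ_{i∈T'} c_i, T ≠ T', and the largest element of the symmetric difference T△T' lies in T' ) ). -/
open Finset
open scoped BigOperators

/-- `d i = 2^(n+1) · (c i + Σ_{j=1}^n c j) + 2^i`. -/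
def dBig (n : ℕ) (c : ℕ → ℕ) : ℕ → ℕ :=
  fun i => 2 ^ (n + 1) * (c i + ∑ j ∈ Finset.Icc 1 n, c j) + 2 ^ i

lemma sum_range_two_pow (m : ℕ) : ∑ i ∈ Finset.range m, 2 ^ i = 2 ^ m - 1 := by
  induction m with
  | zero => simp
  | succ k ih =>
    rw [Finset.sum_range_succ, ih, pow_succ]
    have : 1 ≤ 2 ^ k := Nat.one_le_two_pow
    omega

lemma sum_pow_lt {m : ℕ} {A : Finset ℕ} (h : ∀ a ∈ A, a < m) :
    ∑ i ∈ A, 2 ^ i < 2 ^ m := by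
  calc ∑ i ∈ A, 2 ^ i ≤ ∑ i ∈ Finset.range m, 2 ^ i :=
        Finset.sum_le_sum_of_subset (fun a ha => Finset.mem_range.2 (h a ha))
    _ = 2 ^ m - 1 := sum_range_two_pow m
    _ < 2 ^ m := by have : 1 ≤ 2 ^ m := Nat.one_le_two_pow; omega

lemma key_lt (T T' : Finset ℕ) (m : ℕ) (hm1 : m ∈ T') (hm2 : m ∉ T)
    (hb : ∀ b ∈ (T \ T') ∪ (T' \ T), b ≤ m) :
    ∑ i ∈ T, 2 ^ i < ∑ i ∈ T', 2 ^ i := by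
  have h1 : ∑ i ∈ T ∩ T', 2 ^ i + ∑ i ∈ T \ T', 2 ^ i = ∑ i ∈ T, 2 ^ i :=
    Finset.sum_inter_add_sum_sdiff T T' _
  have h2 : ∑ i ∈ T' ∩ T, 2 ^ i + ∑ i ∈ T' \ T, 2 ^ i = ∑ i ∈ T', 2 ^ i :=
    Finset.sum_inter_add_sum_sdiff T' T _
  rw [Finset.inter_comm] at h2
  have hlt : ∑ i ∈ T \ T', 2 ^ i < ∑ i ∈ T' \ T, 2 ^ i := by
    have hsmall : ∑ i ∈ T \ T', 2 ^ i < 2 ^ m := by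
      apply sum_pow_lt
      intro a ha
      have h1 := hb a (Finset.mem_union_left _ ha)
      have : a ≠ m := by rintro rfl; exact hm2 (Finset.mem_sdiff.1 ha).1
      omega
    have hbig : 2 ^ m ≤ ∑ i ∈ T' \ T, 2 ^ i :=
      Finset.single_le_sum (fun i _ => Nat.zero_le _)
        (Finset.mem_sdiff.2 ⟨hm1, hm2⟩)
    omega
  omega

lemma bits_iff (T T' : Finset ℕ) :
    ∑ i ∈ T, 2 ^ i < ∑ i ∈ T', 2 ^ i ↔
      (T ≠ T' ∧ ∃ m ∈ (T \ T') ∪ (T' \ T), m ∈ T' ∧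
        ∀ b ∈ (T \ T') ∪ (T' \ T), b ≤ m) := by
  constructor
  · intro h
    have hne : T ≠ T' := by rintro rfl; exact lt_irrefl _ h
    have hD : ((T \ T') ∪ (T' \ T)).Nonempty := by
      rw [Finset.nonempty_iff_ne_empty]
      intro hE
      have h1 : T \ T' = ∅ := by
        have := Finset.union_eq_empty.1 hE; exact this.1
      have h2 : T' \ T = ∅ := by
        have := Finset.union_eq_empty.1 hE; exact this.2
      exact hne (Finset.Subset.antisymm (Finset.sdiff_eq_empty_iff_subset.1 h1)
        (Finset.sdiff_eq_empty_iff_subset.1 h2))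
    set m := ((T \ T') ∪ (T' \ T)).max' hD with hm
    have hmD : m ∈ (T \ T') ∪ (T' \ T) := Finset.max'_mem _ hD
    have hball : ∀ b ∈ (T \ T') ∪ (T' \ T), b ≤ m := fun b hb => Finset.le_max' _ b hb
    refine ⟨hne, m, hmD, ?_, hball⟩
    by_contra hmT'
    have hmT : m ∈ T ∧ m ∉ T' := by
      rcases Finset.mem_union.1 hmD with h' | h'
      · exact ⟨(Finset.mem_sdiff.1 h').1, (Finset.mem_sdiff.1 h').2⟩
      · exact absurd (Finset.mem_sdiff.1 h').1 hmT'
    have := key_lt T' T m hmT.1 hmT.2 (by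
      intro b hb
      apply hball
      rwa [Finset.union_comm] at hb)
    omega
  · rintro ⟨hne, m, hmD, hmT', hball⟩
    have hmT : m ∉ T := by
      rcases Finset.mem_union.1 hmD with h' | h'
      · exact absurd hmT' (Finset.mem_sdiff.1 h').2
      · exact (Finset.mem_sdiff.1 h').2
    exact key_lt T T' m hmT' hmT hball

lemma lex_lt (K A B a b : ℕ) (ha : a < K) (hb : b < K) :
    K * A + a < K * B + b ↔ A < B ∨ (A = B ∧ a < b) := by
  constructor
  · intro h
    rcases lt_trichotomy A B with h' | h' | h'
    · exact Or.inl h'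
    · exact Or.inr ⟨h', by subst h'; omega⟩
    · exfalso
      have h1 : K * (B + 1) ≤ K * A := Nat.mul_le_mul_left K h'
      have h2 : K * (B + 1) = K * B + K := by ring
      omega
  · rintro (h' | ⟨h', h''⟩)
    · have h1 : K * (A + 1) ≤ K * B := Nat.mul_le_mul_left K h'
      have h2 : K * (A + 1) = K * A + K := by ring
      omega
    · subst h'; omega

theorem stmt_8 (n : ℕ) (c : ℕ → ℕ) (hc : ∀ i ∈ Finset.Icc 1 n, 0 < c i)
    (T T' : Finset ℕ) (hT : T ⊆ Finset.Icc 1 n) (hT' : T' ⊆ Finset.Icc 1 n)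
    (hcard : T.card = T'.card) :
    ∑ i ∈ T, dBig n c i < ∑ i ∈ T', dBig n c i ↔
      (∑ i ∈ T, c i < ∑ i ∈ T', c i ∨
        (∑ i ∈ T, c i = ∑ i ∈ T', c i ∧ T ≠ T' ∧
          ∃ m ∈ (T \ T') ∪ (T' \ T), m ∈ T' ∧ ∀ b ∈ (T \ T') ∪ (T' \ T), b ≤ m)) := by
  set S := ∑ j ∈ Finset.Icc 1 n, c j with hS
  have hexp : ∀ U : Finset ℕ,
      ∑ i ∈ U, dBig n c i =
        2 ^ (n + 1) * (∑ i ∈ U, c i) + U.card * (2 ^ (n + 1) * S) + ∑ i ∈ U, 2 ^ i := by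
    intro U
    simp only [dBig, mul_add, ← hS]
    rw [Finset.sum_add_distrib, Finset.sum_add_distrib, ← Finset.mul_sum,
      Finset.sum_const, smul_eq_mul]
  rw [hexp T, hexp T', hcard]
  have haux : ∀ x y z w C : ℕ, x + C + y < z + C + w ↔ x + y < z + w := by
    intro x y z w C; omega
  rw [haux]
  have hbT : ∑ i ∈ T, 2 ^ i < 2 ^ (n + 1) := by
    apply sum_pow_lt
    intro a ha
    have := Finset.mem_Icc.1 (hT ha)
    omega
  have hbT' : ∑ i ∈ T', 2 ^ i < 2 ^ (n + 1) := by
    apply sum_pow_lt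
    intro a ha
    have := Finset.mem_Icc.1 (hT' ha)
    omega
  rw [lex_lt _ _ _ _ _ hbT hbT', bits_iff]
end

section
/- Let n ≥ 2 and 1 ≤ s ≤ n−1 be integers. Then for every p ∈ (0,1), f(p) ≥ C(n,s) − (2n − 2p + 1 − 2pn) / ( p^{n−s}·(1−p)^{s}·(2s − 2p + 1) ), where C(n,s) is the binomial coefficient. In particular, f(1 − 1/(2n+2)) ≥ C(n,s). -/
open Finset
open scoped BigOperators

lemma mean_sum_aux (n : ℕ) (x y : ℝ) :
    ∑ i ∈ Finset.range (n+1), (i:ℝ) * (n.choose i) * (x^i * y^(n-i))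
      = n * x * (x+y)^(n-1) := by
  cases n with
  | zero => simp
  | succ m =>
    rw [Finset.sum_range_succ']
    simp only [Nat.cast_zero, zero_mul]
    rw [add_zero]
    have key : ∀ i ∈ Finset.range (m+1),
        ((i:ℝ)+1) * ((m+1).choose (i+1)) * (x^(i+1) * y^(m+1-(i+1)))
          = ((m:ℝ)+1) * x * ((m.choose i) * (x^i * y^(m-i))) := by
      intro i hi
      have h := Nat.add_one_mul_choose_eq m i
      have hc : ((m:ℝ)+1) * (m.choose i) = ((m+1).choose (i+1)) * ((i:ℝ)+1) := by
        exact_mod_cast congrArg (Nat.cast (R := ℝ)) h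
      have : m + 1 - (i+1) = m - i := by omega
      rw [this, pow_succ']
      linear_combination (-(x * x^i * y^(m-i))) * hc
    rw [Finset.sum_congr rfl (fun i hi => by exact_mod_cast key i hi)]
    rw [← Finset.mul_sum]
    have : ∑ i ∈ Finset.range (m+1), (m.choose i : ℝ) * (x^i * y^(m-i)) = (x+y)^m := by
      rw [add_pow]
      exact Finset.sum_congr rfl (fun i hi => by ring)
    rw [this]
    push_cast
    ring

/-- The function `f(p)` from the choice-of-parameter lemma. -/
noncomputable def ffun (n s : ℕ) (p : ℝ) : ℝ :=
  (∑ i ∈ Finset.Icc (n - s + 1) n,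
      (n.choose i : ℝ) * p ^ i * (1 - p) ^ (n - i) * (2 * ((i : ℝ) + p - n) - 1)) /
    (p ^ (n - s) * (1 - p) ^ s * (2 * (s : ℝ) - 2 * p + 1))

theorem stmt_11 (n s : ℕ) (hn : 2 ≤ n) (hs1 : 1 ≤ s) (hsn : s ≤ n - 1) :
    (∀ p ∈ Set.Ioo (0 : ℝ) 1,
      (n.choose s : ℝ) -
          (2 * (n : ℝ) - 2 * p + 1 - 2 * p * n) /
            (p ^ (n - s) * (1 - p) ^ s * (2 * (s : ℝ) - 2 * p + 1))
        ≤ ffun n s p) ∧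
    (n.choose s : ℝ) ≤ ffun n s (1 - 1 / (2 * (n : ℝ) + 2)) := by
  have hsn' : s ≤ n - 1 := hsn
  have hsn2 : s + 1 ≤ n := by omega
  have main : ∀ p ∈ Set.Ioo (0 : ℝ) 1,
      (n.choose s : ℝ) -
          (2 * (n : ℝ) - 2 * p + 1 - 2 * p * n) /
            (p ^ (n - s) * (1 - p) ^ s * (2 * (s : ℝ) - 2 * p + 1))
        ≤ ffun n s p := by
    intro p hp
    obtain ⟨hp0, hp1⟩ := hp
    set q : ℝ := 1 - p with hq
    have hq0 : 0 < q := by simp [hq]; linarith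
    set g : ℕ → ℝ := fun i => (n.choose i : ℝ) * p ^ i * q ^ (n - i) * (2 * ((i : ℝ) + p - n) - 1) with hg
    set D : ℝ := p ^ (n - s) * q ^ s * (2 * (s : ℝ) - 2 * p + 1) with hD
    have hspos : (1:ℝ) ≤ (s:ℝ) := by exact_mod_cast hs1
    have hDpos : 0 < D := by
      apply mul_pos (mul_pos (pow_pos hp0 _) (pow_pos hq0 _))
      linarith
    -- full sum identity
    have hfull : ∑ i ∈ Finset.range (n+1), g i = 2*n*p + 2*p - 2*n - 1 := by
      have h1 : ∑ i ∈ Finset.range (n+1), g i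
          = ∑ i ∈ Finset.range (n+1),
              (2 * ((i:ℝ) * (n.choose i) * (p^i * q^(n-i)))
                + (2*p - 2*(n:ℝ) - 1) * ((n.choose i : ℝ) * (p^i * q^(n-i)))) := by
        apply Finset.sum_congr rfl
        intro i hi
        simp only [hg]
        ring
      rw [h1, Finset.sum_add_distrib, ← Finset.mul_sum, ← Finset.mul_sum,
        mean_sum_aux n p q]
      have hbin : ∑ i ∈ Finset.range (n+1), (n.choose i : ℝ) * (p^i * q^(n-i)) = (p+q)^n := by
        rw [add_pow]
        exact Finset.sum_congr rfl (fun i hi => by ring)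
      rw [hbin]
      have hpq : p + q = 1 := by simp [hq]
      rw [hpq]
      simp
      ring
    -- splitting the sum
    have hsplit : ∑ i ∈ Finset.range (n+1), g i
        = (∑ i ∈ Finset.Ico 0 (n-s), g i) + g (n-s) + ∑ i ∈ Finset.Icc (n-s+1) n, g i := by
      have e1 : Finset.range (n+1) = Finset.Ico 0 (n+1) := by
        rw [Finset.range_eq_Ico]
      have e2 : Finset.Icc (n-s+1) n = Finset.Ico (n-s+1) (n+1) := by
        rw [Finset.Ico_add_one_right_eq_Icc]
      rw [e1, e2, ← Finset.sum_Ico_consecutive g (Nat.zero_le (n-s+1)) (by omega)]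
      rw [Finset.sum_Ico_succ_top (Nat.zero_le _)]
    -- the term at n - s
    have hcast : ((n - s : ℕ) : ℝ) = (n:ℝ) - (s:ℝ) := by
      rw [Nat.cast_sub (by omega)]
    have hterm : g (n-s) = -((n.choose s : ℝ) * D) := by
      simp only [hg, hD]
      rw [Nat.choose_symm (by omega : s ≤ n), hcast]
      have : n - (n - s) = s := by omega
      rw [this]
      ring
    -- lower terms are nonpositive
    have hlow : ∑ i ∈ Finset.Ico 0 (n-s), g i ≤ 0 := by
      apply Finset.sum_nonpos
      intro i hi
      simp only [Finset.mem_Ico] at hi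
      have hi2 : (i:ℝ) ≤ (n:ℝ) - (s:ℝ) - 1 := by
        have : i + 1 ≤ n - s := hi.2
        have : ((i:ℕ):ℝ) + 1 ≤ ((n-s:ℕ):ℝ) := by exact_mod_cast this
        rw [hcast] at this
        linarith
      have hneg : 2 * ((i : ℝ) + p - n) - 1 ≤ 0 := by linarith
      simp only [hg]
      apply mul_nonpos_of_nonneg_of_nonpos _ hneg
      positivity
    -- main numerator inequality
    have hnum : (n.choose s : ℝ) * D - (2 * (n : ℝ) - 2 * p + 1 - 2 * p * n)
        ≤ ∑ i ∈ Finset.Icc (n-s+1) n, g i := by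
      have := hsplit
      rw [hfull, hterm] at this
      nlinarith [hlow]
    have hD' : (2 * (s : ℝ) - 2 * p + 1) = D / (p ^ (n - s) * q ^ s) := by
      field_simp [hD]
      rw [hD]; ring
    rw [ffun]
    have : (n.choose s : ℝ) -
        (2 * (n : ℝ) - 2 * p + 1 - 2 * p * n) / (p ^ (n - s) * (1 - p) ^ s * (2 * (s : ℝ) - 2 * p + 1))
        = ((n.choose s : ℝ) * D - (2 * (n : ℝ) - 2 * p + 1 - 2 * p * n)) / D := by
      rw [← hq, ← hD]
      field_simp
    rw [this, ← hq, ← hD]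
    exact (div_le_div_iff_of_pos_right hDpos).mpr hnum
  refine ⟨main, ?_⟩
  have hnR : (2:ℝ) ≤ (n:ℝ) := by exact_mod_cast hn
  have hp0 : (1 - 1 / (2 * (n : ℝ) + 2)) ∈ Set.Ioo (0:ℝ) 1 := by
    constructor
    · have : 1 / (2 * (n : ℝ) + 2) < 1 := by
        rw [div_lt_one (by linarith)]; linarith
      linarith
    · have : 0 < 1 / (2 * (n : ℝ) + 2) := by positivity
      linarith
  have h := main _ hp0
  have hzero : 2 * (n : ℝ) - 2 * (1 - 1 / (2 * (n : ℝ) + 2)) + 1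
      - 2 * (1 - 1 / (2 * (n : ℝ) + 2)) * n = 0 := by
    field_simp
    ring
  rw [hzero] at h
  simpa using h
end

section
/- Let x_1,…,x_n be positive integers, B a positive integer, and 0 < ε < 1/(1 + Σ_{i=1}^n x_i). Consider a single bidder who, with probability 1−ε, is additive with value v_a(S) = Σ_{i∈S} x_i for each S ⊆ [n], and with probability ε is budgeted with value v_b(S) = min{ Σ_{i∈S} x_i, B }. A direct mechanism consists of probability distributions μ_a, μ_b on the subsets of [n] and prices τ_a, τ_b ∈ ℝ; write V_t(μ) = Σ_{S⊆[n]} μ(S)·v_t(S) for t ∈ {a,b}. The mechanism is BIC if V_a(μ_a) − τ_a ≥ V_a(μ_b) − τ_b and V_b(μ_b) − τ_b ≥ V_b(μ_a) − τ_a, IR if V_a(μ_a) − τ_a ≥ 0 and V_b(μ_b) − τ_b ≥ 0, and its revenue is (1−ε)·τ_a + ε·τ_b. Let M = max{ Σ_{i∈T} x_i : T ⊆ [n], Σ_{i∈T} x_i ≤ B }. Then every BIC and IR direct mechanism maximizing revenue satisfies: μ_a is the point mass on [n] and τ_a = Σ_{i=1}^n x_i; μ_b is supported on sets T with Σ_{i∈T}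 x_i = M; and τ_b = M. -/
open Finset
open scoped BigOperators Classical

/-- A probability distribution on subsets of `[n]`. -/
def IsProb (n : ℕ) (μ : Finset (Fin n) → ℝ) : Prop :=
  (∀ S, 0 ≤ μ S) ∧ (∀ S, μ S ≤ 1) ∧ ∑ S : Finset (Fin n), μ S = 1

/-- The additive (unbudgeted) valuation. -/
def vAdd (n : ℕ) (x : Fin n → ℕ) (S : Finset (Fin n)) : ℝ := ∑ i ∈ S, (x i : ℝ)

/-- The budgeted valuation. -/
noncomputable def vBud (n : ℕ) (x : Fin n → ℕ) (B : ℕ) (S : Finset (Fin n)) : ℝ :=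
  min (∑ i ∈ S, (x i : ℝ)) (B : ℝ)

/-- Expected value of a valuation under a lottery `μ`. -/
def expVal (n : ℕ) (μ : Finset (Fin n) → ℝ) (v : Finset (Fin n) → ℝ) : ℝ :=
  ∑ S : Finset (Fin n), μ S * v S

/-- The BIC constraints for the two-type (additive / budgeted) bidder. -/
def MechBIC (n : ℕ) (x : Fin n → ℕ) (B : ℕ)
    (μa μb : Finset (Fin n) → ℝ) (τa τb : ℝ) : Prop :=
  expVal n μa (vAdd n x) - τa ≥ expVal n μb (vAdd n x) - τb ∧
  expVal n μb (vBud n x B) - τb ≥ expVal n μa (vBud n x B) - τa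

/-- The IR constraints. -/
def MechIR (n : ℕ) (x : Fin n → ℕ) (B : ℕ)
    (μa μb : Finset (Fin n) → ℝ) (τa τb : ℝ) : Prop :=
  expVal n μa (vAdd n x) - τa ≥ 0 ∧ expVal n μb (vBud n x B) - τb ≥ 0

/-- `M`: the largest value `Σ_{i∈T} x i` over subsets `T ⊆ [n]` not exceeding `B`. -/
def Mmax (n : ℕ) (x : Fin n → ℕ) (B : ℕ) : ℕ :=
  (Finset.univ.filter (fun T : Finset (Fin n) => ∑ i ∈ T, x i ≤ B)).sup
    (fun T => ∑ i ∈ T, x i)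

lemma expVal_point (n : ℕ) (T : Finset (Fin n)) (v : Finset (Fin n) → ℝ) :
    expVal n (fun S => if S = T then 1 else 0) v = v T := by
  simp [expVal, ite_mul]

lemma isProb_point (n : ℕ) (T : Finset (Fin n)) :
    IsProb n (fun S => if S = T then 1 else 0) := by
  refine ⟨fun S => ?_, fun S => ?_, ?_⟩
  · by_cases h : S = T <;> simp [h]
  · by_cases h : S = T <;> simp [h]
  · simp

set_option maxHeartbeats 1000000 in
theorem stmt_15 (n : ℕ) (x : Fin n → ℕ) (hx : ∀ i, 0 < x i) (B : ℕ) (hB : 0 < B)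
    (ε : ℝ) (hε0 : 0 < ε) (hε : ε < 1 / (1 + ∑ i, (x i : ℝ)))
    (μa μb : Finset (Fin n) → ℝ) (τa τb : ℝ)
    (hμa : IsProb n μa) (hμb : IsProb n μb)
    (hBIC : MechBIC n x B μa μb τa τb) (hIR : MechIR n x B μa μb τa τb)
    (hopt : ∀ μa' μb' τa' τb', IsProb n μa' → IsProb n μb' →
      MechBIC n x B μa' μb' τa' τb' → MechIR n x B μa' μb' τa' τb' →
      (1 - ε) * τa' + ε * τb' ≤ (1 - ε) * τa + ε * τb) :
    μa = (fun S => if S = Finset.univ then 1 else 0) ∧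
    τa = ∑ i, (x i : ℝ) ∧
    (∀ T : Finset (Fin n), μb T ≠ 0 → ∑ i ∈ T, x i = Mmax n x B) ∧
    τb = (Mmax n x B : ℝ) := by
  classical
  obtain ⟨hBIC1, hBIC2⟩ := hBIC
  obtain ⟨hIR1, hIR2⟩ := hIR
  obtain ⟨hμa0, hμa1, hμaS⟩ := hμa
  obtain ⟨hμb0, hμb1, hμbS⟩ := hμb
  -- basic facts
  have hcast : ∀ S : Finset (Fin n), vAdd n x S = ((∑ i ∈ S, x i : ℕ) : ℝ) := by
    intro S; simp [vAdd]
  have hXN : (∑ i, (x i : ℝ)) = ((∑ i, x i : ℕ) : ℝ) := by push_cast; rfl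
  have hXnn : (0:ℝ) ≤ ∑ i, (x i : ℝ) := Finset.sum_nonneg fun i _ => Nat.cast_nonneg _
  have h0X : (0:ℝ) < 1 + ∑ i, (x i : ℝ) := by linarith
  have hεX : ε * (1 + ∑ i, (x i : ℝ)) < 1 := by
    have := (lt_div_iff₀ h0X).mp hε
    linarith
  have hε1 : ε < 1 := by nlinarith [mul_nonneg hε0.le hXnn]
  have hu : (0:ℝ) < 1 - ε := by linarith
  -- facts about M = Mmax
  have hMB : Mmax n x B ≤ B :=
    Finset.sup_le (fun T hT => (Finset.mem_filter.mp hT).2)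
  have hMle : ∀ T : Finset (Fin n), ∑ i ∈ T, x i ≤ B → ∑ i ∈ T, x i ≤ Mmax n x B :=
    fun T hT => by
      unfold Mmax
      exact Finset.le_sup (f := fun T => ∑ i ∈ T, x i)
        (Finset.mem_filter.mpr ⟨Finset.mem_univ T, hT⟩)
  obtain ⟨T₀, hT₀mem, hT₀⟩ :
      ∃ T ∈ (Finset.univ.filter (fun T : Finset (Fin n) => ∑ i ∈ T, x i ≤ B)),
        Mmax n x B = ∑ i ∈ T, x i := by
    apply Finset.exists_mem_eq_sup
    exact ⟨∅, Finset.mem_filter.mpr ⟨Finset.mem_univ _, by simp⟩⟩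
  have hT₀B : ∑ i ∈ T₀, x i ≤ B := (Finset.mem_filter.mp hT₀mem).2
  have hT₀M : ((∑ i ∈ T₀, x i : ℕ) : ℝ) = (Mmax n x B : ℝ) := by exact_mod_cast hT₀.symm
  have hMBr : ((Mmax n x B : ℕ) : ℝ) ≤ (B:ℝ) := Nat.cast_le.mpr hMB
  have hvAddT₀ : vAdd n x T₀ = (Mmax n x B : ℝ) := by rw [hcast]; exact hT₀M
  have hvBudT₀ : vBud n x B T₀ = (Mmax n x B : ℝ) := by
    have h : (∑ i ∈ T₀, (x i : ℝ)) = (Mmax n x B : ℝ) := hvAddT₀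
    rw [vBud, h]
    exact min_eq_left hMBr
  -- the candidate optimal mechanism gives a lower bound on revenue
  have hcand : (1 - ε) * (∑ i, (x i : ℝ)) + ε * (Mmax n x B : ℝ) ≤ (1 - ε) * τa + ε * τb := by
    have hminle : min (∑ i, (x i : ℝ)) (B:ℝ) ≤ ∑ i, (x i : ℝ) := min_le_left _ _
    refine hopt (fun S => if S = Finset.univ then 1 else 0)
      (fun S => if S = T₀ then 1 else 0) (∑ i, (x i : ℝ)) (Mmax n x B : ℝ)
      (isProb_point n _) (isProb_point n _) ⟨?_, ?_⟩ ⟨?_, ?_⟩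
    · rw [expVal_point, expVal_point, hvAddT₀]; simp [vAdd]
    · rw [expVal_point, expVal_point, hvBudT₀]
      simp only [vBud]
      linarith
    · rw [expVal_point]; simp [vAdd]
    · rw [expVal_point, hvBudT₀]; linarith
  -- the key per-set bound
  have hvX : ∀ T : Finset (Fin n), vAdd n x T ≤ ∑ i, (x i : ℝ) := by
    intro T
    exact Finset.sum_le_sum_of_subset_of_nonneg (Finset.subset_univ T)
      (fun i _ _ => Nat.cast_nonneg _)
  have key : ∀ S : Finset (Fin n),
      (vBud n x B S - (1 - ε) * vAdd n x S ≤ ε * (Mmax n x B : ℝ)) ∧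
      ((∑ i ∈ S, x i) ≠ Mmax n x B →
        vBud n x B S - (1 - ε) * vAdd n x S < ε * (Mmax n x B : ℝ)) := by
    intro S
    have hsX : (∑ i ∈ S, x i) ≤ ∑ i, x i :=
      Finset.sum_le_sum_of_subset (Finset.subset_univ S)
    by_cases hsB : (∑ i ∈ S, x i) ≤ B
    · have hmin : vBud n x B S = vAdd n x S := by
        rw [vBud]
        exact min_eq_left (by exact_mod_cast hsB)
      have hsM : (∑ i ∈ S, x i) ≤ Mmax n x B := hMle S hsB
      have hsMr : ((∑ i ∈ S, x i : ℕ) : ℝ) ≤ (Mmax n x B : ℝ) := Nat.cast_le.mpr hsM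
      constructor
      · rw [hmin, hcast]
        nlinarith [mul_le_mul_of_nonneg_left hsMr hε0.le]
      · intro hne
        have hsM' : ((∑ i ∈ S, x i : ℕ) : ℝ) < (Mmax n x B : ℝ) :=
          Nat.cast_lt.mpr (lt_of_le_of_ne hsM hne)
        rw [hmin, hcast]
        nlinarith [mul_lt_mul_of_pos_left hsM' hε0]
    · push_neg at hsB
      have hmin : vBud n x B S = (B:ℝ) := by
        rw [vBud]
        exact min_eq_right (by exact_mod_cast hsB.le)
      have hBs : (B:ℝ) + 1 ≤ vAdd n x S := by
        rw [hcast]; exact_mod_cast Nat.succ_le_of_lt hsB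
      have hBX : (B:ℝ) ≤ ∑ i, (x i : ℝ) := by
        rw [hXN]; exact_mod_cast (le_trans hsB.le hsX)
      have h1 : (1 - ε) * ((B:ℝ) + 1) ≤ (1 - ε) * vAdd n x S :=
        mul_le_mul_of_nonneg_left hBs hu.le
      have h2 : ε * (B:ℝ) ≤ ε * (∑ i, (x i : ℝ)) := mul_le_mul_of_nonneg_left hBX hε0.le
      have h3 : (0:ℝ) ≤ ε * (Mmax n x B : ℝ) := mul_nonneg hε0.le (Nat.cast_nonneg _)
      have strict : vBud n x B S - (1 - ε) * vAdd n x S < ε * (Mmax n x B : ℝ) := by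
        rw [hmin]; nlinarith
      exact ⟨strict.le, fun _ => strict⟩
  -- aggregate inequalities
  have hA_le : expVal n μa (vAdd n x) ≤ ∑ i, (x i : ℝ) := by
    rw [expVal]
    calc ∑ S : Finset (Fin n), μa S * vAdd n x S
        ≤ ∑ S : Finset (Fin n), μa S * (∑ i, (x i : ℝ)) :=
          Finset.sum_le_sum (fun T _ => mul_le_mul_of_nonneg_left (hvX T) (hμa0 T))
      _ = ∑ i, (x i : ℝ) := by rw [← Finset.sum_mul, hμaS, one_mul]
  have hsplit : expVal n μb (vBud n x B) - (1 - ε) * expVal n μb (vAdd n x)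
      = ∑ S : Finset (Fin n), μb S * (vBud n x B S - (1 - ε) * vAdd n x S) := by
    rw [expVal, expVal, Finset.mul_sum, ← Finset.sum_sub_distrib]
    exact Finset.sum_congr rfl fun S _ => by ring
  have hεMsum : ∑ S : Finset (Fin n), μb S * (ε * (Mmax n x B : ℝ)) = ε * (Mmax n x B : ℝ) := by
    rw [← Finset.sum_mul, hμbS, one_mul]
  have f4 : expVal n μb (vBud n x B) - (1 - ε) * expVal n μb (vAdd n x)
      ≤ ε * (Mmax n x B : ℝ) := by
    rw [hsplit, ← hεMsum]
    exact Finset.sum_le_sum (fun T _ => mul_le_mul_of_nonneg_left (key T).1 (hμb0 T))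
  have f2 : τb ≤ expVal n μb (vBud n x B) := by linarith
  have mf1 : (1 - ε) * τa
      ≤ (1 - ε) * (expVal n μa (vAdd n x) - expVal n μb (vAdd n x) + τb) :=
    mul_le_mul_of_nonneg_left (by linarith) hu.le
  have mf3 : (1 - ε) * expVal n μa (vAdd n x) ≤ (1 - ε) * (∑ i, (x i : ℝ)) :=
    mul_le_mul_of_nonneg_left hA_le hu.le
  -- all the inequalities are tight
  have eq3 : (1 - ε) * expVal n μa (vAdd n x) = (1 - ε) * (∑ i, (x i : ℝ)) :=
    le_antisymm mf3 (by nlinarith [mf1, f2, f4, hcand])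
  have eq1 : (1 - ε) * τa
      = (1 - ε) * (expVal n μa (vAdd n x) - expVal n μb (vAdd n x) + τb) :=
    le_antisymm mf1 (by nlinarith [mf3, f2, f4, hcand])
  have eq2 : τb = expVal n μb (vBud n x B) :=
    le_antisymm f2 (by nlinarith [mf1, mf3, f4, hcand])
  have eq4 : expVal n μb (vBud n x B) - (1 - ε) * expVal n μb (vAdd n x)
      = ε * (Mmax n x B : ℝ) :=
    le_antisymm f4 (by nlinarith [mf1, mf3, f2, hcand])
  have hAX : expVal n μa (vAdd n x) = ∑ i, (x i : ℝ) :=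
    mul_left_cancel₀ (ne_of_gt hu) eq3
  have hτa : τa = expVal n μa (vAdd n x) - expVal n μb (vAdd n x) + τb :=
    mul_left_cancel₀ (ne_of_gt hu) eq1
  -- support of μa
  have hμaz : ∀ S : Finset (Fin n), S ≠ Finset.univ → μa S = 0 := by
    intro S hS
    by_contra h
    have hpos : 0 < μa S := lt_of_le_of_ne (hμa0 S) (Ne.symm h)
    obtain ⟨i, _, hiS⟩ := Finset.exists_of_ssubset ((Finset.subset_univ S).ssubset_of_ne hS)
    have hlt : vAdd n x S < ∑ i, (x i : ℝ) := by
      apply Finset.sum_lt_sum_of_subset (Finset.subset_univ S) (Finset.mem_univ i) hiS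
      · exact_mod_cast hx i
      · exact fun j _ _ => Nat.cast_nonneg _
    have hAlt : expVal n μa (vAdd n x) < ∑ i, (x i : ℝ) := by
      rw [expVal]
      calc ∑ T : Finset (Fin n), μa T * vAdd n x T
          < ∑ T : Finset (Fin n), μa T * (∑ i, (x i : ℝ)) := by
            apply Finset.sum_lt_sum
            · exact fun T _ => mul_le_mul_of_nonneg_left (hvX T) (hμa0 T)
            · exact ⟨S, Finset.mem_univ S, mul_lt_mul_of_pos_left hlt hpos⟩
        _ = ∑ i, (x i : ℝ) := by rw [← Finset.sum_mul, hμaS, one_mul]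
    linarith [hAX]
  have hμaU : μa Finset.univ = 1 := by
    have h := Finset.sum_eq_single_of_mem (f := μa) Finset.univ
      (Finset.mem_univ (Finset.univ : Finset (Fin n))) (fun b _ hb => hμaz b hb)
    rw [← h]; exact hμaS.symm ▸ rfl
  -- support of μb
  have hμbM : ∀ T : Finset (Fin n), μb T ≠ 0 → ∑ i ∈ T, x i = Mmax n x B := by
    intro S hSne
    by_contra h
    have hpos : 0 < μb S := lt_of_le_of_ne (hμb0 S) (Ne.symm hSne)
    have hlt : ∑ T : Finset (Fin n), μb T * (vBud n x B T - (1 - ε) * vAdd n x T)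
        < ∑ T : Finset (Fin n), μb T * (ε * (Mmax n x B : ℝ)) := by
      apply Finset.sum_lt_sum
      · exact fun T _ => mul_le_mul_of_nonneg_left (key T).1 (hμb0 T)
      · exact ⟨S, Finset.mem_univ S, mul_lt_mul_of_pos_left ((key S).2 h) hpos⟩
    rw [hεMsum, ← hsplit, eq4] at hlt
    exact lt_irrefl _ hlt
  -- compute expVal n μb
  have hAb : expVal n μb (vAdd n x) = (Mmax n x B : ℝ) := by
    rw [expVal]
    calc ∑ S : Finset (Fin n), μb S * vAdd n x S
        = ∑ S : Finset (Fin n), μb S * (Mmax n x B : ℝ) := by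
          refine Finset.sum_congr rfl fun S _ => ?_
          by_cases hS : μb S = 0
          · simp [hS]
          · rw [hcast, hμbM S hS]
      _ = (Mmax n x B : ℝ) := by rw [← Finset.sum_mul, hμbS, one_mul]
  have hBb : expVal n μb (vBud n x B) = (Mmax n x B : ℝ) := by
    rw [expVal]
    calc ∑ S : Finset (Fin n), μb S * vBud n x B S
        = ∑ S : Finset (Fin n), μb S * (Mmax n x B : ℝ) := by
          refine Finset.sum_congr rfl fun S _ => ?_
          by_cases hS : μb S = 0
          · simp [hS]
          · rw [vBud, show (∑ i ∈ S, (x i : ℝ)) = (Mmax n x B : ℝ) from by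
              exact_mod_cast hμbM S hS, min_eq_left hMBr]
      _ = (Mmax n x B : ℝ) := by rw [← Finset.sum_mul, hμbS, one_mul]
  have hτb : τb = (Mmax n x B : ℝ) := by rw [eq2, hBb]
  refine ⟨?_, ?_, hμbM, hτb⟩
  · funext S
    by_cases hS : S = Finset.univ
    · simp [hS, hμaU]
    · simp [hS, hμaz S hS]
  · rw [hτa, hAX, hAb, hτb]; ring
end

section
/- Consider LP1 with n = 2, a = (0,0), d = (1,1), and p = (1/2, 1/2) (i.e., a single additive bidder with two items whose values are independently 0 or 1, each with probability 1/2). Then the maximum of the LP1 objective over all LP1-feasible pairs (u, q) equals 1. -/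
open Finset
open scoped BigOperators Classical

lemma sum4 (f : Finset (Fin 2) → ℝ) :
    ∑ S : Finset (Fin 2), f S = f ∅ + f {0} + f {1} + f {0,1} := by
  rw [show (univ : Finset (Finset (Fin 2))) = {∅, {0}, {1}, {0,1}} from by decide]
  rw [Finset.sum_insert (by decide), Finset.sum_insert (by decide),
    Finset.sum_insert (by decide), Finset.sum_singleton]
  ring

lemma pmass4 (S : Finset (Fin 2)) : pmass 2 (fun _ => 1/2) S = 1/4 := by
  unfold pmass
  rw [Finset.prod_const, Finset.prod_const]
  have hc : Sᶜ.card = 2 - S.card := by simpa using Finset.card_compl S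
  rw [hc]
  have hS : S.card ≤ 2 := by simpa using Finset.card_le_card (Finset.subset_univ S)
  interval_cases h : S.card <;> norm_num

/-- Two items, values independently 0 or 1 each with probability 1/2:
the optimal LP1 value is 1. -/
theorem stmt_16 :
    IsGreatest
      {r : ℝ | ∃ u q, LP1Feasible 2 (fun _ => 0) (fun _ => 1) u q ∧
        r = LP1Obj 2 (fun _ => 0) (fun _ => 1) (fun _ => 1 / 2) u q}
      1 := by
  constructor
  · refine ⟨fun _ => 0, fun S i => if i ∈ S then 1 else 0, ⟨?_, fun S => le_refl 0, ?_⟩, ?_⟩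
    · intro S T
      simp only [vval, Fin.sum_univ_two]
      by_cases h0S : (0 : Fin 2) ∈ S <;> by_cases h0T : (0 : Fin 2) ∈ T <;>
        by_cases h1S : (1 : Fin 2) ∈ S <;> by_cases h1T : (1 : Fin 2) ∈ T <;>
        simp [h0S, h0T, h1S, h1T]
    · intro S i
      by_cases h : i ∈ S <;> simp [h]
    · unfold LP1Obj
      rw [sum4]
      simp only [pmass4, vval, Fin.sum_univ_two]
      norm_num [Finset.mem_insert]
  · rintro r ⟨u, q, ⟨hbic, hir, hq⟩, rfl⟩
    unfold LP1Obj
    rw [sum4]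
    simp only [pmass4, vval, Fin.sum_univ_two]
    have h1 := hir ∅
    have h2 := hir {0}
    have h3 := hir {1}
    have h4 := hir ({0,1} : Finset (Fin 2))
    have q1 := hq {0} 0
    have q2 := hq {1} 1
    have q3 := hq ({0,1} : Finset (Fin 2)) 0
    have q4 := hq ({0,1} : Finset (Fin 2)) 1
    norm_num [Finset.mem_insert]
    nlinarith [q1.1, q1.2, q2.1, q2.2, q3.1, q3.2, q4.1, q4.2]
end
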